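/- Every t in the closed interval [1/6, 11/6] can be written as t = x + y with x, y ∈ F_49; that is, F_49 + F_49 ⊇ [1/6, 11/6]. -/

import Mathlib

/-- The Gauss map `x ↦ {1/x}`. -/
noncomputable def gaussMap (x : ℝ) : ℝ := Int.fract (1 / x)

/-- `Fset n` is the set of irrational numbers in `(0,1)` all of whose continued
fraction partial quotients are at most `n`. -/
noncomputable def Fset (n : ℕ) : Set ℝ :=
  {x | Irrational x ∧ x ∈ Set.Ioo (0 : ℝ) 1 ∧
    ∀ k : ℕ, ⌊1 / (gaussMap^[k] x)⌋ ≤ (n : ℤ)}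


set_option maxHeartbeats 1000000

namespace S12

noncomputable def mc : ℝ := (Real.sqrt 53 - 7) / 14
noncomputable def Mc : ℝ := 1 / (1 + mc)

lemma sqrt53_sq : Real.sqrt 53 ^ 2 = 53 := Real.sq_sqrt (by norm_num)
lemma sqrt53_lb : 7.28 < Real.sqrt 53 := by
  nlinarith [sqrt53_sq, Real.sqrt_nonneg 53]
lemma sqrt53_ub : Real.sqrt 53 < 7.2802 := by
  nlinarith [sqrt53_sq, Real.sqrt_nonneg 53]
lemma mc_lb : 0.02 < mc := by
  unfold mc; nlinarith [sqrt53_lb]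
lemma mc_ub : mc < 0.0200151 := by
  unfold mc; nlinarith [sqrt53_ub]
lemma mc_pos : 0 < mc := by nlinarith [mc_lb]
lemma mc_quad : 49 * mc ^ 2 + 49 * mc - 1 = 0 := by
  unfold mc
  linear_combination (1/4) * sqrt53_sq
lemma one_add_mc_pos : 0 < 1 + mc := by nlinarith [mc_pos]
lemma Mc_eq : Mc * (1 + mc) = 1 := by
  unfold Mc
  exact one_div_mul_cancel one_add_mc_pos.ne'
lemma Mc_lb : 0.98037 < Mc := by
  unfold Mc
  rw [lt_div_iff₀ one_add_mc_pos]
  nlinarith [mc_ub]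
lemma Mc_ub : Mc < 0.98040 := by
  unfold Mc
  rw [div_lt_iff₀ one_add_mc_pos]
  nlinarith [mc_lb]
lemma key49 : mc * (49 + Mc) = 1 := by
  unfold Mc
  field_simp [one_add_mc_pos.ne']
  linear_combination mc_quad
lemma Mc_pos : 0 < Mc := by nlinarith [Mc_lb]
lemma Mc_lt_one : Mc < 1 := by nlinarith [Mc_ub]
lemma mc_lt_Mc : mc < Mc := by nlinarith [mc_ub, Mc_lb]

/-! ### Words and continuants -/

def V1 (w : List ℕ) : Prop := ∀ d ∈ w, 1 ≤ d
def V (w : List ℕ) : Prop := ∀ d ∈ w, 1 ≤ d ∧ d ≤ 49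

lemma V.v1 {w : List ℕ} (h : V w) : V1 w := fun d hd => (h d hd).1

structure CT where
  q : ℤ
  p : ℤ
  q' : ℤ
  p' : ℤ

def ct : List ℕ → CT
  | [] => ⟨1, 0, 0, 1⟩
  | a :: w => ⟨(a : ℤ) * (ct w).q + (ct w).p, (ct w).q,
      (a : ℤ) * (ct w).q' + (ct w).p', (ct w).q'⟩

@[simp] lemma ct_nil : ct [] = ⟨1, 0, 0, 1⟩ := rfl
@[simp] lemma ct_cons (a : ℕ) (w : List ℕ) :
    ct (a :: w) = ⟨(a : ℤ) * (ct w).q + (ct w).p, (ct w).q,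
      (a : ℤ) * (ct w).q' + (ct w).p', (ct w).q'⟩ := rfl

lemma V1_cons {a : ℕ} {w : List ℕ} (h : V1 (a :: w)) : 1 ≤ a ∧ V1 w :=
  ⟨h a (by simp), fun d hd => h d (by simp [hd])⟩

lemma ct_facts {w : List ℕ} (h : V1 w) :
    1 ≤ (ct w).q ∧ 0 ≤ (ct w).p ∧ (ct w).p ≤ (ct w).q ∧
    0 ≤ (ct w).q' ∧ (ct w).q' ≤ (ct w).q ∧ 0 ≤ (ct w).p' ∧
    (ct w).q' + (ct w).p' ≤ (ct w).q + (ct w).p := by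
  induction w with
  | nil => norm_num
  | cons a w ih =>
    obtain ⟨ha, hw⟩ := V1_cons h
    obtain ⟨h1, h2, h3, h4, h5, h6, h7⟩ := ih hw
    have ha' : (1 : ℤ) ≤ (a : ℤ) := by exact_mod_cast ha
    refine ⟨?_, ?_, ?_, ?_, ?_, ?_, ?_⟩ <;> simp only [ct_cons] <;> nlinarith

lemma ct_det (w : List ℕ) :
    (ct w).p' * (ct w).q - (ct w).p * (ct w).q' = (-1) ^ w.length := by
  induction w with
  | nil => norm_num
  | cons a w ih =>
    simp only [ct_cons, List.length_cons, pow_succ]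
    ring_nf
    ring_nf at ih
    linarith [ih]

lemma ct_qbound {w : List ℕ} (h : V w) :
    (ct w).q ≤ 50 ^ w.length ∧ (ct w).p ≤ 50 ^ w.length := by
  induction w with
  | nil => norm_num
  | cons a w ih =>
    have ha : (a : ℤ) ≤ 49 := by exact_mod_cast (h a (by simp)).2
    have hw : V w := fun d hd => h d (by simp [hd])
    obtain ⟨h1, h2⟩ := ih hw
    have hq1 : 1 ≤ (ct w).q := (ct_facts hw.v1).1
    have hp0 : 0 ≤ (ct w).p := (ct_facts hw.v1).2.1
    have hpow : (0:ℤ) < 50 ^ w.length := pow_pos (by norm_num) _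
    constructor
    · simp only [ct_cons, List.length_cons, pow_succ]
      nlinarith
    · simp only [ct_cons, List.length_cons, pow_succ]
      nlinarith

/-! ### The Möbius maps -/

noncomputable def Pm : List ℕ → ℝ → ℝ
  | [] => fun x => x
  | a :: w => fun x => 1 / (a + Pm w x)

@[simp] lemma Pm_nil (x : ℝ) : Pm [] x = x := rfl
lemma Pm_cons (a : ℕ) (w : List ℕ) (x : ℝ) : Pm (a :: w) x = 1 / (a + Pm w x) := rfl

noncomputable def den (w : List ℕ) (x : ℝ) : ℝ := ((ct w).q' : ℝ) * x + ((ct w).q : ℝ)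
noncomputable def num (w : List ℕ) (x : ℝ) : ℝ := ((ct w).p' : ℝ) * x + ((ct w).p : ℝ)

lemma den_pos {w : List ℕ} (h : V1 w) {x : ℝ} (hx : 0 ≤ x) : 0 < den w x := by
  obtain ⟨h1, _, _, h4, _, _, _⟩ := ct_facts h
  have e1 : (1:ℝ) ≤ ((ct w).q : ℝ) := by exact_mod_cast h1
  have e2 : (0:ℝ) ≤ ((ct w).q' : ℝ) := by exact_mod_cast h4
  unfold den; nlinarith

lemma num_nonneg {w : List ℕ} (h : V1 w) {x : ℝ} (hx : 0 ≤ x) : 0 ≤ num w x := by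
  obtain ⟨_, h2, _, _, _, h6, _⟩ := ct_facts h
  have e1 : (0:ℝ) ≤ ((ct w).p : ℝ) := by exact_mod_cast h2
  have e2 : (0:ℝ) ≤ ((ct w).p' : ℝ) := by exact_mod_cast h6
  unfold num; nlinarith

lemma Pm_nonneg {w : List ℕ} (h : V1 w) {x : ℝ} (hx : 0 ≤ x) : 0 ≤ Pm w x := by
  induction w with
  | nil => simpa
  | cons a w ih =>
    obtain ⟨ha, hw⟩ := V1_cons h
    have h1 : (1:ℝ) ≤ (a:ℝ) := by exact_mod_cast ha
    have := ih hw
    have hden : 0 < (a:ℝ) + Pm w x := by nlinarith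
    rw [Pm_cons]
    positivity

lemma Pm_eq {w : List ℕ} (h : V1 w) {x : ℝ} (hx : 0 ≤ x) :
    Pm w x = num w x / den w x := by
  induction w with
  | nil => simp [num, den]
  | cons a w ih =>
    obtain ⟨ha, hw⟩ := V1_cons h
    have h1 : (1:ℝ) ≤ (a:ℝ) := by exact_mod_cast ha
    have hd := den_pos hw hx
    have hn := num_nonneg hw hx
    have hP := Pm_nonneg hw hx
    have key : (a:ℝ) + Pm w x = ((a:ℝ) * den w x + num w x) / den w x := by
      rw [ih hw]; field_simp
    have hd2 : 0 < (a:ℝ) * den w x + num w x := by nlinarith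
    rw [Pm_cons, key, one_div_div]
    have e1 : num (a :: w) x = den w x := by
      simp only [num, den, ct_cons]
    have e2 : den (a :: w) x = (a:ℝ) * den w x + num w x := by
      simp only [num, den, ct_cons]; push_cast; ring
    rw [e1, e2]

lemma Pm_diff {w : List ℕ} (h : V1 w) {x y : ℝ} (hx : 0 ≤ x) (hy : 0 ≤ y) :
    Pm w y - Pm w x = ((-1) ^ w.length : ℝ) * ((y - x) / (den w x * den w y)) := by
  have hdx := den_pos h hx
  have hdy := den_pos h hy
  have det : ((ct w).p' : ℝ) * (ct w).q - (ct w).p * (ct w).q' = ((-1) ^ w.length : ℝ) := by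
    exact_mod_cast ct_det w
  have key : num w y * den w x - num w x * den w y = ((-1) ^ w.length : ℝ) * (y - x) := by
    unfold num den
    linear_combination (y - x) * det
  rw [Pm_eq h hy, Pm_eq h hx, div_sub_div _ _ hdy.ne' hdx.ne', mul_div_assoc',
    div_eq_div_iff (by positivity) (by positivity)]
  linear_combination (den w x * den w y) * key

end S12



namespace S12

noncomputable def Len (w : List ℕ) (x y : ℝ) : ℝ := (y - x) / (den w x * den w y)

lemma len_nonneg {w : List ℕ} (h : V1 w) {x y : ℝ} (hx : 0 ≤ x) (hy : 0 ≤ y)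
    (hxy : x ≤ y) : 0 ≤ Len w x y := by
  have hdx := den_pos h hx; have hdy := den_pos h hy
  unfold Len
  exact div_nonneg (by linarith) (mul_pos hdx hdy).le

lemma len_add {w : List ℕ} (h : V1 w) {x y z : ℝ} (hx : 0 ≤ x) (hy : 0 ≤ y) (hz : 0 ≤ z) :
    Len w x y + Len w y z = Len w x z := by
  have hdx := den_pos h hx
  have hdy := den_pos h hy
  have hdz := den_pos h hz
  have nx := (den_pos h hx).ne'
  have ny := (den_pos h hy).ne'
  have nz := (den_pos h hz).ne'
  unfold Len
  field_simp
  unfold den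
  ring

lemma pm_diff_even {w : List ℕ} (h : V1 w) (he : Even w.length) {x y : ℝ}
    (hx : 0 ≤ x) (hy : 0 ≤ y) : Pm w y - Pm w x = Len w x y := by
  rw [Pm_diff h hx hy, he.neg_one_pow]; unfold Len; ring

lemma pm_diff_odd {w : List ℕ} (h : V1 w) (he : ¬ Even w.length) {x y : ℝ}
    (hx : 0 ≤ x) (hy : 0 ≤ y) : Pm w x - Pm w y = Len w x y := by
  rw [show Pm w x - Pm w y = -(Pm w y - Pm w x) by ring, Pm_diff h hx hy,
    (Nat.not_even_iff_odd.1 he).neg_one_pow]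
  unfold Len; ring

lemma pm_mono_even {w : List ℕ} (h : V1 w) (he : Even w.length) {x y : ℝ}
    (hx : 0 ≤ x) (hy : 0 ≤ y) (hxy : x ≤ y) : Pm w x ≤ Pm w y := by
  have := pm_diff_even h he hx hy
  have := len_nonneg h hx hy hxy
  linarith

lemma pm_anti_odd {w : List ℕ} (h : V1 w) (he : ¬ Even w.length) {x y : ℝ}
    (hx : 0 ≤ x) (hy : 0 ≤ y) (hxy : x ≤ y) : Pm w y ≤ Pm w x := by
  have := pm_diff_odd h he hx hy
  have := len_nonneg h hx hy hxy
  linarith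

/-! ### pattern points -/

noncomputable def u1 (A : ℝ) : ℝ := 1 / (A + 1 + mc)
noncomputable def u2 (A : ℝ) : ℝ := 1 / (A + Mc)
noncomputable def u3 (A : ℝ) : ℝ := 1 / (A + mc)

lemma u_order {A : ℝ} (hal : 1 ≤ A) (hau : A ≤ 48) :
    mc < u1 A ∧ u1 A < u2 A ∧ u2 A < u3 A ∧ u3 A ≤ Mc := by
  have h1 := mc_lb; have h2 := mc_ub; have h3 := Mc_lb; have h4 := Mc_ub
  have d1 : (0:ℝ) < A + 1 + mc := by nlinarith
  have d2 : (0:ℝ) < A + Mc := by nlinarith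
  have d3 : (0:ℝ) < A + mc := by nlinarith
  refine ⟨?_, ?_, ?_, ?_⟩
  · unfold u1; rw [lt_div_iff₀ d1]; nlinarith
  · unfold u1 u2; rw [div_lt_div_iff₀ d1 d2]; nlinarith
  · unfold u2 u3; rw [div_lt_div_iff₀ d2 d3]; nlinarith
  · unfold u3 Mc; rw [div_le_div_iff₀ d3 one_add_mc_pos]; nlinarith

lemma u3_le_Mc {A : ℝ} (hal : 1 ≤ A) : u3 A ≤ Mc := by
  have h1 := mc_lb
  have d3 : (0:ℝ) < A + mc := by nlinarith
  unfold u3 Mc; rw [div_le_div_iff₀ d3 one_add_mc_pos]; nlinarith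

lemma u3_pos {A : ℝ} (hal : 1 ≤ A) : 0 < u3 A := by
  have h1 := mc_lb
  have : (0:ℝ) < A + mc := by nlinarith
  exact one_div_pos.2 this

lemma mc_lt_u3 {A : ℝ} (hal : 0 < A) (hau : A ≤ 49) : mc < u3 A := by
  have h1 := mc_lb; have h2 := mc_ub; have h3 := Mc_lb; have h4 := Mc_ub
  have d3 : (0:ℝ) < A + mc := by nlinarith
  unfold u3; rw [lt_div_iff₀ d3]
  nlinarith [key49]

/-! ### Pm maps [mc, Mc] into itself -/

lemma T_mem {d : ℕ} (hd1 : 1 ≤ d) (hd49 : d ≤ 49) {z : ℝ} (hz : z ∈ Set.Icc mc Mc) :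
    1 / ((d:ℝ) + z) ∈ Set.Icc mc Mc := by
  obtain ⟨hz1, hz2⟩ := hz
  have hdl : (1:ℝ) ≤ (d:ℝ) := by exact_mod_cast hd1
  have hdu : (d:ℝ) ≤ 49 := by exact_mod_cast hd49
  have h1 := mc_pos; have h2 := Mc_pos
  have hden : (0:ℝ) < (d:ℝ) + z := by nlinarith
  constructor
  · rw [le_div_iff₀ hden]
    nlinarith [key49]
  · rw [div_le_iff₀ hden]
    nlinarith [Mc_eq]

lemma Pm_mem {w : List ℕ} (h : V w) {x : ℝ} (hx : x ∈ Set.Icc mc Mc) :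
    Pm w x ∈ Set.Icc mc Mc := by
  induction w with
  | nil => simpa
  | cons a w ih =>
    have hw : V w := fun d hd => h d (by simp [hd])
    have ha := h a (by simp)
    rw [Pm_cons]
    exact T_mem ha.1 ha.2 (ih hw)

lemma Pm_append (w : List ℕ) (d : ℕ) (x : ℝ) :
    Pm (w ++ [d]) x = Pm w (1 / ((d:ℝ) + x)) := by
  induction w with
  | nil => simp [Pm_cons]
  | cons a w ih => rw [List.cons_append, Pm_cons, Pm_cons, ih]

/-! ### Gauss map on Pm values -/

lemma gauss_step {w : List ℕ} (h : V w) (d : ℕ) (hd : 1 ≤ d ∧ d ≤ 49) {ξ : ℝ}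
    (hξ : ξ ∈ Set.Icc mc Mc) : gaussMap (Pm (d :: w) ξ) = Pm w ξ := by
  have hz := Pm_mem h hξ
  obtain ⟨hz1, hz2⟩ := hz
  have hd1 : (1:ℝ) ≤ (d:ℝ) := by exact_mod_cast hd.1
  have h1 := mc_pos; have h2 := Mc_lt_one
  have hden : (0:ℝ) < (d:ℝ) + Pm w ξ := by nlinarith
  rw [Pm_cons]
  unfold gaussMap
  rw [one_div_one_div]
  rw [add_comm, Int.fract_add_natCast]
  exact Int.fract_eq_self.2 ⟨by linarith, by linarith⟩

lemma gauss_iter {k : ℕ} : ∀ {w : List ℕ}, V w → k ≤ w.length → ∀ {ξ : ℝ},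
    ξ ∈ Set.Icc mc Mc → gaussMap^[k] (Pm w ξ) = Pm (w.drop k) ξ := by
  induction k with
  | zero => intro w _ _ ξ _; simp
  | succ k ih =>
    intro w hw hk ξ hξ
    match w with
    | d :: w' =>
      have hw' : V w' := fun x hx => hw x (by simp [hx])
      rw [Function.iterate_succ_apply, gauss_step hw' d (hw d (by simp)) hξ]
      rw [ih hw' (by simpa using hk) hξ]
      simp

/-! ### irrationality via orbit -/

lemma gauss_rat {p q : ℕ} (hp : 0 < p) (hq : 0 < q) (h1 : (p:ℝ)/q < 1) :
    gaussMap ((p:ℝ)/q) = ((q % p : ℕ) : ℝ) / p := by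
  have hpr : (0:ℝ) < p := by exact_mod_cast hp
  have hqr : (0:ℝ) < q := by exact_mod_cast hq
  unfold gaussMap
  rw [one_div_div]
  have hsplit : (q:ℝ)/p = ((q % p : ℕ) : ℝ) / p + ((q / p : ℕ) : ℕ) := by
    rw [div_add' _ _ _ hpr.ne']
    congr 1
    have h2 : ((q % p : ℕ) : ℝ) + ((q / p : ℕ) : ℝ) * (p:ℝ) = (q:ℝ) := by
      exact_mod_cast Nat.mod_add_div' q p
    push_cast
    linarith
  rw [hsplit, Int.fract_add_natCast]
  refine Int.fract_eq_self.2 ⟨by positivity, ?_⟩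
  rw [div_lt_one hpr]
  exact_mod_cast Nat.mod_lt q hp

lemma no_rat_orbit : ∀ p : ℕ, ∀ q : ℕ, 0 < q → ∀ x : ℝ, x = (p:ℝ) / q →
    (∀ k, gaussMap^[k] x ∈ Set.Ioo (0:ℝ) 1) → False := by
  intro p
  induction p using Nat.strong_induction_on with
  | _ p ih =>
    intro q hq x hx horb
    have h0 := horb 0
    simp at h0
    have hp : 0 < p := by
      by_contra hc
      push_neg at hc
      interval_cases p
      simp at hx
      rw [hx] at h0
      exact lt_irrefl _ h0.1
    have hx1 : (p:ℝ)/q < 1 := by rw [← hx]; exact h0.2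
    have hg : gaussMap x = ((q % p : ℕ) : ℝ) / p := by rw [hx]; exact gauss_rat hp hq hx1
    exact ih (q % p) (Nat.mod_lt q hp) p hp (gaussMap x) hg
      (fun k => by rw [← Function.iterate_succ_apply]; exact horb (k+1))

lemma irrational_of_orbit {x : ℝ} (h : ∀ k, gaussMap^[k] x ∈ Set.Icc mc Mc) :
    Irrational x := by
  rintro ⟨r, hr⟩
  have horb : ∀ k, gaussMap^[k] x ∈ Set.Ioo (0:ℝ) 1 := by
    intro k
    have := h k
    exact ⟨lt_of_lt_of_le mc_pos this.1, lt_of_le_of_lt this.2 Mc_lt_one⟩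
  have hx0 : 0 < x := (horb 0).1
  have hrpos : 0 < r := by
    rw [← Rat.cast_pos (K := ℝ), hr]; exact hx0
  have hnum : 0 < r.num := Rat.num_pos.2 hrpos
  have hxeq : x = ((r.num.toNat : ℕ) : ℝ) / (r.den : ℕ) := by
    rw [← hr, Rat.cast_def]
    congr 1
    exact_mod_cast (Int.toNat_of_nonneg hnum.le).symm
  exact no_rat_orbit r.num.toNat r.den r.pos x hxeq horb

end S12

namespace S12

/-! ### basic positivity for pattern denominators -/

lemma d1_pos {A : ℝ} (hal : 1 ≤ A) : (0:ℝ) < A + 1 + mc := by nlinarith [mc_pos]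
lemma d2_pos {A : ℝ} (hal : 1 ≤ A) : (0:ℝ) < A + Mc := by nlinarith [Mc_pos]
lemma d3_pos {A : ℝ} (hal : 1 ≤ A) : (0:ℝ) < A + mc := by nlinarith [mc_pos]

lemma u1_pos {A : ℝ} (hal : 1 ≤ A) : 0 < u1 A := one_div_pos.2 (d1_pos hal)
lemma u2_pos {A : ℝ} (hal : 1 ≤ A) : 0 < u2 A := one_div_pos.2 (d2_pos hal)

/-! ### identities for pattern differences -/

lemma id_u21 {A : ℝ} (hal : 1 ≤ A) :
    u2 A - u1 A = (1 + mc - Mc) / ((A + Mc) * (A + 1 + mc)) := by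
  have h1 := (d1_pos hal).ne'
  have h2 := (d2_pos hal).ne'
  unfold u1 u2; rw [div_sub_div _ _ h2 h1, div_eq_div_iff (by positivity) (by positivity)]
  ring

lemma id_u32 {A : ℝ} (hal : 1 ≤ A) :
    u3 A - u2 A = (Mc - mc) / ((A + mc) * (A + Mc)) := by
  have h2 := (d2_pos hal).ne'
  have h3 := (d3_pos hal).ne'
  unfold u2 u3; rw [div_sub_div _ _ h3 h2, div_eq_div_iff (by positivity) (by positivity)]
  ring

lemma id_u1m {A : ℝ} (hal : 1 ≤ A) :
    u1 A - mc = (1 - mc * (A + 1 + mc)) / (A + 1 + mc) := by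
  have h1 := (d1_pos hal).ne'
  unfold u1; rw [div_sub' h1, div_eq_div_iff (by positivity) (by positivity)]
  ring

/-! ### pattern inequalities -/

lemma numfacts : 0.02 < mc ∧ mc < 0.0200151 ∧ 0.98037 < Mc ∧ Mc < 0.98040 :=
  ⟨mc_lb, mc_ub, Mc_lb, Mc_ub⟩

lemma pA1 {A : ℝ} (hal : 1 ≤ A) (hau : A ≤ 48) : u2 A - u1 A ≤ u1 A - mc := by
  obtain ⟨n1, n2, n3, n4⟩ := numfacts
  have h1 := d1_pos hal; have h2 := d2_pos hal
  rw [id_u21 hal, id_u1m hal]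
  rw [div_le_div_iff₀ (by positivity) h1]
  have key : (1 + mc - Mc) ≤ (1 - mc * (A + 1 + mc)) * (A + Mc) := by
    rcases le_total A 40 with hc | hc
    · have k1 : (0.17:ℝ) ≤ 1 - mc * (A + 1 + mc) := by nlinarith
      have k2 : (1.98:ℝ) ≤ A + Mc := by nlinarith
      nlinarith [mul_le_mul k1 k2 (by norm_num) (by nlinarith)]
    · have k1 : (0.018:ℝ) ≤ 1 - mc * (A + 1 + mc) := by nlinarith
      have k2 : (40.98:ℝ) ≤ A + Mc := by nlinarith
      nlinarith [mul_le_mul k1 k2 (by norm_num) (by nlinarith)]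
  nlinarith [mul_le_mul_of_nonneg_right key h1.le]

lemma pA2 {A : ℝ} (hal : 1 ≤ A) :
    (u2 A - u1 A) * (1 + u3 A) ≤ (u3 A - u2 A) * (1 + u1 A) := by
  obtain ⟨n1, n2, n3, n4⟩ := numfacts
  have h1 := d1_pos hal; have h2 := d2_pos hal; have h3 := d3_pos hal
  have e3 : 1 + u3 A = (A + 1 + mc) / (A + mc) := by
    unfold u3; field_simp; ring
  have e1 : 1 + u1 A = (A + 2 + mc) / (A + 1 + mc) := by
    unfold u1; field_simp; ring
  rw [id_u21 hal, id_u32 hal, e3, e1, div_mul_div_comm, div_mul_div_comm]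
  rw [div_le_div_iff₀ (by positivity) (by positivity)]
  nlinarith [mul_pos h1 h2, mul_pos h2 h3,
    mul_pos (mul_pos h1 h2) h3, mul_pos (mul_pos h1 h1) (mul_pos h2 h3)]

lemma pC {A : ℝ} (hal : 1 ≤ A) (hau : A ≤ 48) :
    u3 A - mc ≤ 250000 * (u2 A - u1 A) := by
  obtain ⟨n1, n2, n3, n4⟩ := numfacts
  have h1 := d1_pos hal; have h2 := d2_pos hal
  have hu3 : u3 A ≤ Mc := u3_le_Mc hal
  have hd : u3 A - mc ≤ 1 := by nlinarith
  have hd0 : 0 ≤ u3 A - mc := by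
    have := mc_lt_u3 (by nlinarith : (0:ℝ) < A) (by nlinarith)
    linarith
  rw [id_u21 hal, ← mul_div_assoc]
  rw [le_div_iff₀ (by positivity)]
  have k1 : (A + Mc) * (A + 1 + mc) ≤ 2450 := by nlinarith
  have k2 : (u3 A - mc) * ((A + Mc) * (A + 1 + mc)) ≤ 1 * 2450 :=
    mul_le_mul hd k1 (by positivity) (by norm_num)
  nlinarith

lemma pB1 {A : ℝ} (hal : 1 ≤ A) (hau : A ≤ 48) :
    (u2 (A+1) - u1 (A+1)) * ((1 + u1 A) * (1 + u2 A)) ≤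
      (u2 A - u1 A) * ((1 + u1 (A+1)) * (1 + u2 (A+1))) := by
  obtain ⟨n1, n2, n3, n4⟩ := numfacts
  have p1 : (0:ℝ) < A + 1 + mc := by nlinarith
  have p2 : (0:ℝ) < A + Mc := by nlinarith
  have p3 : (0:ℝ) < A + 1 + 1 + mc := by nlinarith
  have p4 : (0:ℝ) < A + 1 + Mc := by nlinarith
  have p5 : (0:ℝ) < A + 1 + 1 + 1 + mc := by nlinarith
  have p6 : (0:ℝ) < A + 1 + 1 + Mc := by nlinarith
  have hgap : (0:ℝ) < 1 + mc - Mc := by nlinarith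
  have hL : (u2 (A+1) - u1 (A+1)) * ((1 + u1 A) * (1 + u2 A)) =
      ((1 + mc - Mc) / ((A + 1 + mc) * (A + Mc))) *
        (((A + 1 + 1 + mc) * (A + 1 + Mc)) / ((A + 1 + 1 + mc) * (A + 1 + Mc))) := by
    unfold u1 u2
    field_simp
    ring
  have hR : (u2 A - u1 A) * ((1 + u1 (A+1)) * (1 + u2 (A+1))) =
      ((1 + mc - Mc) / ((A + 1 + mc) * (A + Mc))) *
        (((A + 1 + 1 + 1 + mc) * (A + 1 + 1 + Mc)) / ((A + 1 + 1 + mc) * (A + 1 + Mc))) := by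
    unfold u1 u2
    field_simp
    ring
  rw [hL, hR]
  have hX : (0:ℝ) < (1 + mc - Mc) / ((A + 1 + mc) * (A + Mc)) := by positivity
  apply mul_le_mul_of_nonneg_left _ hX.le
  rw [div_le_div_iff₀ (by positivity) (by positivity)]
  nlinarith [mul_pos p3 p4]

end S12

namespace S12

/-! ### den step lemmas -/

lemma den_mono {w : List ℕ} (h : V1 w) {x y : ℝ} (hxy : x ≤ y) :
    den w x ≤ den w y := by
  have h4 : (0:ℝ) ≤ ((ct w).q' : ℝ) := by exact_mod_cast (ct_facts h).2.2.2.1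
  unfold den; nlinarith

lemma keyD {w : List ℕ} (h : V1 w) {x y : ℝ} (hxy : x ≤ y) :
    den w y * (1 + x) ≤ den w x * (1 + y) := by
  have h5 : ((ct w).q' : ℝ) ≤ ((ct w).q : ℝ) := by exact_mod_cast (ct_facts h).2.2.2.2.1
  unfold den; nlinarith

lemma den_le_two_mc {w : List ℕ} (h : V1 w) {x : ℝ} (hx : x ≤ 1) :
    den w x ≤ 2 * den w mc := by
  have h1 : (1:ℝ) ≤ ((ct w).q : ℝ) := by exact_mod_cast (ct_facts h).1
  have h4 : (0:ℝ) ≤ ((ct w).q' : ℝ) := by exact_mod_cast (ct_facts h).2.2.2.1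
  have h5 : ((ct w).q' : ℝ) ≤ ((ct w).q : ℝ) := by exact_mod_cast (ct_facts h).2.2.2.2.1
  unfold den; nlinarith [mc_pos]

/-! ### generic ratio-combination lemma -/

lemma ratio_le {g1 g2 D1 D2 E1 E2 f1 f2 e1 e2 : ℝ}
    (hg1 : 0 ≤ g1) (hg2 : 0 ≤ g2)
    (hD1 : 0 ≤ D1) (hD2 : 0 ≤ D2) (hE1 : 0 ≤ E1) (hE2 : 0 ≤ E2)
    (hf1 : 0 ≤ f1) (hf2 : 0 ≤ f2) (he1 : 0 < e1) (he2 : 0 < e2)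
    (k1 : D1 * e1 ≤ E1 * f1) (k2 : D2 * e2 ≤ E2 * f2)
    (hp : g1 * (f1 * f2) ≤ g2 * (e1 * e2)) :
    g1 * (D1 * D2) ≤ g2 * (E1 * E2) := by
  have t1 : g1 * ((D1*e1) * (D2*e2)) ≤ g1 * ((E1*f1) * (E2*f2)) := by
    apply mul_le_mul_of_nonneg_left _ hg1
    apply mul_le_mul k1 k2 (by positivity) (by nlinarith)
  have t2 : (g1 * (f1*f2)) * (E1*E2) ≤ (g2 * (e1*e2)) * (E1*E2) := by
    apply mul_le_mul_of_nonneg_right hp (by positivity)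
  have main : (g1 * (D1*D2)) * (e1*e2) ≤ (g2 * (E1*E2)) * (e1*e2) := by
    calc (g1 * (D1*D2)) * (e1*e2) = g1 * ((D1*e1) * (D2*e2)) := by ring
      _ ≤ g1 * ((E1*f1) * (E2*f2)) := t1
      _ = (g1 * (f1*f2)) * (E1*E2) := by ring
      _ ≤ (g2 * (e1*e2)) * (E1*E2) := t2
      _ = (g2 * (E1*E2)) * (e1*e2) := by ring
  exact le_of_mul_le_mul_right main (by positivity)

/-! ### abs-form of Len -/

lemma len_abs {w : List ℕ} (h : V1 w) {x y : ℝ} (hx : 0 ≤ x) (hy : 0 ≤ y)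
    (hxy : x ≤ y) : |Pm w y - Pm w x| = Len w x y := by
  rcases Nat.even_or_odd w.length with he | ho
  · rw [pm_diff_even h he hx hy, abs_of_nonneg (len_nonneg h hx hy hxy)]
  · rw [abs_sub_comm, pm_diff_odd h (Nat.not_even_iff_odd.2 ho) hx hy,
      abs_of_nonneg (len_nonneg h hx hy hxy)]

lemma len_append {w : List ℕ} (h : V1 w) {d : ℕ} (hd : 1 ≤ d) {x y : ℝ}
    (hx : 0 ≤ x) (hy : 0 ≤ y) (hxy : x ≤ y) :
    Len (w ++ [d]) x y = Len w (1/((d:ℝ)+y)) (1/((d:ℝ)+x)) := by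
  have hV1' : V1 (w ++ [d]) := by
    intro e he
    rcases List.mem_append.1 he with h1 | h1
    · exact h e h1
    · simp at h1; omega
  have hd1 : (1:ℝ) ≤ (d:ℝ) := by exact_mod_cast hd
  have hdy : (0:ℝ) < (d:ℝ) + y := by nlinarith
  have hdx : (0:ℝ) < (d:ℝ) + x := by nlinarith
  have hTy : (0:ℝ) ≤ 1/((d:ℝ)+y) := by positivity
  have hTx : (0:ℝ) ≤ 1/((d:ℝ)+x) := by positivity
  have hT : 1/((d:ℝ)+y) ≤ 1/((d:ℝ)+x) := by
    apply div_le_div_of_nonneg_left (by norm_num) hdx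
    linarith
  rw [← len_abs hV1' hx hy hxy, ← len_abs h hTy hTx hT,
    Pm_append, Pm_append, abs_sub_comm]

/-! ### pB2 and pB2' -/

lemma b1b2 : u1 1 = 1/(2+mc) ∧ u2 1 = 1/(1+Mc) := by
  constructor <;> [unfold u1; unfold u2] <;> norm_num

lemma pB2 {D : ℝ} (hD1 : 1 ≤ D) (hD48 : D ≤ 48) :
    1/(D + u1 1) - 1/(D + u2 1) ≤ u2 D - u1 D := by
  obtain ⟨n1, n2, n3, n4⟩ := numfacts
  have hb1 : u1 1 = 1/(2+mc) := b1b2.1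
  have hb2 : u2 1 = 1/(1+Mc) := b1b2.2
  have q1 : (0:ℝ) < 2 + mc := by nlinarith
  have q2 : (0:ℝ) < 1 + Mc := by nlinarith
  have hb1l : (0.49:ℝ) ≤ u1 1 := by rw [hb1, le_div_iff₀ q1]; nlinarith
  have hb1u : u1 1 ≤ 0.496 := by rw [hb1, div_le_iff₀ q1]; nlinarith
  have hb2l : (0.50:ℝ) ≤ u2 1 := by rw [hb2, le_div_iff₀ q2]; nlinarith
  have hb2u : u2 1 ≤ 0.505 := by rw [hb2, div_le_iff₀ q2]; nlinarith
  have hb12 : u1 1 < u2 1 := by nlinarith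
  have p1 : (0:ℝ) < D + u1 1 := by nlinarith
  have p2 : (0:ℝ) < D + u2 1 := by nlinarith
  have p3 : (0:ℝ) < D + Mc := by nlinarith
  have p4 : (0:ℝ) < D + 1 + mc := by nlinarith
  have hgap : (0:ℝ) < 1 + mc - Mc := by nlinarith
  have hs : 1/(D + u1 1) - 1/(D + u2 1) = (u2 1 - u1 1)/((D + u1 1)*(D + u2 1)) := by
    rw [div_sub_div _ _ p1.ne' p2.ne', div_eq_div_iff (by positivity) (by positivity)]
    ring
  have hb : u2 1 - u1 1 = (1 + mc - Mc)/((1+Mc)*(2+mc)) := by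
    have := id_u21 (le_refl (1:ℝ))
    convert this using 3 <;> norm_num
  rw [hs, hb, id_u21 hD1, div_div]
  rw [div_le_div_iff₀ (by positivity) (by positivity)]
  have kl : (3.99:ℝ) ≤ (1+Mc)*(2+mc) := by nlinarith
  have ku : (D+0.49)*(D+0.50) ≤ (D + u1 1)*(D + u2 1) := by nlinarith
  have big : (3.99:ℝ) * ((D+0.49)*(D+0.50)) ≤ (1+Mc)*(2+mc)*((D + u1 1)*(D + u2 1)) := by
    nlinarith [mul_le_mul kl ku (by nlinarith) (by nlinarith)]
  have hden : (D + Mc) * (D + 1 + mc) ≤ (1+Mc)*(2+mc)*((D + u1 1)*(D + u2 1)) := by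
    nlinarith [big, Mc_eq, sq_nonneg D, sq_nonneg (D-1)]
  nlinarith [mul_le_mul_of_nonneg_left hden hgap.le]

lemma pB2' :
    (1/((49:ℝ) + u1 1) - 1/((49:ℝ) + u2 1)) * ((1 + u1 48) * (1 + u2 48)) ≤
      (u2 48 - u1 48) * ((1 + 1/((49:ℝ) + u2 1)) * (1 + 1/((49:ℝ) + u1 1))) := by
  obtain ⟨n1, n2, n3, n4⟩ := numfacts
  have hb1 : u1 1 = 1/(2+mc) := b1b2.1
  have hb2 : u2 1 = 1/(1+Mc) := b1b2.2
  have q1 : (0:ℝ) < 2 + mc := by nlinarith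
  have q2 : (0:ℝ) < 1 + Mc := by nlinarith
  have hb1l : (0.49:ℝ) ≤ u1 1 := by rw [hb1, le_div_iff₀ q1]; nlinarith
  have hb1u : u1 1 ≤ 0.496 := by rw [hb1, div_le_iff₀ q1]; nlinarith
  have hb2l : (0.50:ℝ) ≤ u2 1 := by rw [hb2, le_div_iff₀ q2]; nlinarith
  have hb2u : u2 1 ≤ 0.505 := by rw [hb2, div_le_iff₀ q2]; nlinarith
  have p1 : (0:ℝ) < (49:ℝ) + u1 1 := by nlinarith
  have p2 : (0:ℝ) < (49:ℝ) + u2 1 := by nlinarith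
  have hgap : (0:ℝ) < 1 + mc - Mc := by nlinarith
  -- the gap between the two s-points
  have hs : 1/((49:ℝ) + u1 1) - 1/((49:ℝ) + u2 1) = (u2 1 - u1 1)/(((49:ℝ) + u1 1)*((49:ℝ) + u2 1)) := by
    rw [div_sub_div _ _ p1.ne' p2.ne', div_eq_div_iff (by positivity) (by positivity)]
    ring
  have hb : u2 1 - u1 1 = (1 + mc - Mc)/((1+Mc)*(2+mc)) := by
    have := id_u21 (le_refl (1:ℝ))
    convert this using 3 <;> norm_num
  have hgapu : 1 + mc - Mc ≤ 0.0396451 := by nlinarith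
  have hgapl : (0.0396:ℝ) ≤ 1 + mc - Mc := by nlinarith
  have hbu : u2 1 - u1 1 ≤ 0.0099107 := by
    rw [hb, div_le_iff₀ (by positivity)]
    nlinarith
  have hsu : 1/((49:ℝ) + u1 1) - 1/((49:ℝ) + u2 1) ≤ 0.0000040470 := by
    rw [hs, div_le_iff₀ (by positivity)]
    nlinarith
  -- the 48-gap lower bound
  have h48 : (0.0000164:ℝ) ≤ u2 48 - u1 48 := by
    rw [id_u21 (by norm_num : (1:ℝ) ≤ 48)]
    rw [le_div_iff₀ (by positivity)]
    nlinarith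
  -- the correction factors
  have hu148 : u1 48 ≤ 0.0205 := by
    unfold u1
    rw [div_le_iff₀ (by nlinarith)]
    nlinarith
  have hu248 : u2 48 ≤ 0.0205 := by
    unfold u2
    rw [div_le_iff₀ (by nlinarith)]
    nlinarith
  have hu148n : 0 ≤ u1 48 := (u1_pos (by norm_num)).le
  have hu248n : 0 ≤ u2 48 := (u2_pos (by norm_num)).le
  have hsn : 0 ≤ 1/((49:ℝ) + u2 1) := by positivity
  have hsn2 : 0 ≤ 1/((49:ℝ) + u1 1) := by positivity
  have hsd : 0 ≤ 1/((49:ℝ) + u1 1) - 1/((49:ℝ) + u2 1) := by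
    have hnum : 0 ≤ u2 1 - u1 1 := by nlinarith
    rw [hs]
    exact div_nonneg hnum (by positivity)
  nlinarith [mul_le_mul hsu (by nlinarith : (1 + u1 48) * (1 + u2 48) ≤ 1.042)
      (by positivity) (by norm_num),
    mul_le_mul h48 (by nlinarith : (1:ℝ) ≤ (1 + 1/((49:ℝ) + u2 1)) * (1 + 1/((49:ℝ) + u1 1)))
      (by norm_num) (by nlinarith)]

end S12

namespace S12

noncomputable def glen (w : List ℕ) (a : ℕ) : ℝ := Len w (u1 (a:ℝ)) (u2 (a:ℝ))
noncomputable def blen (w : List ℕ) (a : ℕ) : ℝ := Len w mc (u3 (a:ℝ))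
noncomputable def bset (w : List ℕ) (a : ℕ) : Set ℝ :=
  Set.uIcc (Pm w mc) (Pm w (u3 (a:ℝ)))

lemma b1_bounds : (0.49:ℝ) ≤ u1 1 ∧ u1 1 ≤ (0.496:ℝ) := by
  obtain ⟨n1, n2, n3, n4⟩ := numfacts
  have q1 : (0:ℝ) < 2 + mc := by nlinarith
  have hb1 : u1 (1:ℝ) = 1/(2+mc) := by unfold u1; norm_num
  constructor
  · rw [hb1, le_div_iff₀ q1]; nlinarith
  · rw [hb1, div_le_iff₀ q1]; nlinarith

lemma b2_bounds : (0.50:ℝ) ≤ u2 1 ∧ u2 1 ≤ (0.505:ℝ) := by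
  obtain ⟨n1, n2, n3, n4⟩ := numfacts
  have q2 : (0:ℝ) < 1 + Mc := by nlinarith
  have hb2 : u2 (1:ℝ) = 1/(1+Mc) := by unfold u2; norm_num
  constructor
  · rw [hb2, le_div_iff₀ q2]; nlinarith
  · rw [hb2, div_le_iff₀ q2]; nlinarith

lemma u1_lt_u2 {A : ℝ} (hal : 1 ≤ A) : u1 A < u2 A := by
  obtain ⟨n1, n2, n3, n4⟩ := numfacts
  unfold u1 u2
  rw [div_lt_div_iff₀ (d1_pos hal) (d2_pos hal)]
  nlinarith

lemma LA1 {w : List ℕ} (hV : V1 w) {A : ℝ} (hal : 1 ≤ A) (hau : A ≤ 48) : Len w (u1 A) (u2 A) ≤ Len w mc (u1 A) := by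
  obtain ⟨o1, o2, o3, o4⟩ := u_order hal hau
  have hm := mc_pos
  have pos1 : (0:ℝ) ≤ u1 A := by linarith
  have pos2 : (0:ℝ) ≤ u2 A := by linarith
  have dm := den_pos hV hm.le
  have d1 := den_pos hV pos1
  have d2 := den_pos hV pos2
  unfold Len
  rw [div_le_div_iff₀ (by positivity) (by positivity)]
  have m1 : den w mc ≤ den w (u2 A) := den_mono hV (by linarith)
  have k : (u2 A - u1 A) * den w mc ≤ (u1 A - mc) * den w (u2 A) :=
    mul_le_mul (pA1 hal hau) m1 dm.le (by linarith)
  nlinarith [mul_le_mul_of_nonneg_right k d1.le]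

lemma LA2 {w : List ℕ} (hV : V1 w) {A : ℝ} (hal : 1 ≤ A) (hau : A ≤ 48) : Len w (u1 A) (u2 A) ≤ Len w (u2 A) (u3 A) := by
  obtain ⟨o1, o2, o3, o4⟩ := u_order hal hau
  have hm := mc_pos
  have pos1 : (0:ℝ) ≤ u1 A := by linarith
  have pos2 : (0:ℝ) ≤ u2 A := by linarith
  have pos3 : (0:ℝ) ≤ u3 A := by linarith
  have d1 := den_pos hV pos1
  have d2 := den_pos hV pos2
  have d3 := den_pos hV pos3
  unfold Len
  rw [div_le_div_iff₀ (by positivity) (by positivity)]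
  have k1 : den w (u3 A) * (1 + u1 A) ≤ den w (u1 A) * (1 + u3 A) :=
    keyD hV (by linarith)
  have hp : (u2 A - u1 A) * ((1 + u3 A) * 1) ≤ (u3 A - u2 A) * ((1 + u1 A) * 1) := by
    have := pA2 hal
    nlinarith
  have := ratio_le (g1 := u2 A - u1 A) (g2 := u3 A - u2 A)
    (D1 := den w (u3 A)) (D2 := den w (u2 A)) (E1 := den w (u1 A)) (E2 := den w (u2 A))
    (f1 := 1 + u3 A) (f2 := 1) (e1 := 1 + u1 A) (e2 := 1)
    (by linarith) (by linarith) d3.le d2.le d1.le d2.le (by linarith) (by norm_num)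
    (by linarith) (by norm_num) k1 (by norm_num) hp
  nlinarith [this]

lemma LB1 {w : List ℕ} (hV : V1 w) {A : ℝ} (hal : 1 ≤ A) (hau : A ≤ 48) : Len w (u1 (A+1)) (u2 (A+1)) ≤ Len w (u1 A) (u2 A) := by
  obtain ⟨o1, o2, o3, o4⟩ := u_order hal hau
  have hal' : (1:ℝ) ≤ A + 1 := by linarith
  have q2 : u1 (A+1) < u2 (A+1) := u1_lt_u2 hal'
  have hm := mc_pos
  have pos1 : (0:ℝ) ≤ u1 A := by linarith
  have pos2 : (0:ℝ) ≤ u2 A := by linarith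
  have pv1 : (0:ℝ) ≤ u1 (A+1) := (u1_pos hal').le
  have pv2 : (0:ℝ) ≤ u2 (A+1) := (u2_pos hal').le
  have d1 := den_pos hV pos1
  have d2 := den_pos hV pos2
  have dv1 := den_pos hV pv1
  have dv2 := den_pos hV pv2
  -- orders between levels
  have hv1u1 : u1 (A+1) ≤ u1 A := by
    unfold u1; apply div_le_div_of_nonneg_left (by norm_num) (d1_pos hal); nlinarith [mc_pos]
  have hv2u2 : u2 (A+1) ≤ u2 A := by
    unfold u2; apply div_le_div_of_nonneg_left (by norm_num) (d2_pos hal); nlinarith [Mc_pos]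
  unfold Len
  rw [div_le_div_iff₀ (by positivity) (by positivity)]
  have k1 : den w (u1 A) * (1 + u1 (A+1)) ≤ den w (u1 (A+1)) * (1 + u1 A) :=
    keyD hV hv1u1
  have k2 : den w (u2 A) * (1 + u2 (A+1)) ≤ den w (u2 (A+1)) * (1 + u2 A) :=
    keyD hV hv2u2
  have hp := pB1 hal hau
  have := ratio_le (g1 := u2 (A+1) - u1 (A+1)) (g2 := u2 A - u1 A)
    (D1 := den w (u1 A)) (D2 := den w (u2 A))
    (E1 := den w (u1 (A+1))) (E2 := den w (u2 (A+1)))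
    (f1 := 1 + u1 A) (f2 := 1 + u2 A) (e1 := 1 + u1 (A+1)) (e2 := 1 + u2 (A+1))
    (by linarith) (by linarith) d1.le d2.le dv1.le dv2.le (by linarith) (by linarith)
    (by linarith) (by linarith) k1 k2 hp
  nlinarith [this]

lemma LB2 {w : List ℕ} (hV : V1 w) {A : ℝ} (hal : 1 ≤ A) (hau : A ≤ 48) : Len w (1/(A + u2 1)) (1/(A + u1 1)) ≤ Len w (u1 A) (u2 A) := by
  obtain ⟨o1, o2, o3, o4⟩ := u_order hal hau
  obtain ⟨b1, b2, b3, b4⟩ := u_order (le_refl (1:ℝ)) (by norm_num)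
  have hm := mc_pos
  have hs12 : u1 1 < u2 1 := b2
  have p1 : (0:ℝ) < A + u1 1 := by nlinarith
  have p2 : (0:ℝ) < A + u2 1 := by nlinarith
  set s1 := 1/(A + u2 1) with hs1
  set s2 := 1/(A + u1 1) with hs2
  have hs1p : 0 < s1 := by positivity
  have hs2p : 0 < s2 := by positivity
  have hs : s1 ≤ s2 := by
    rw [hs1, hs2]
    apply div_le_div_of_nonneg_left (by norm_num) p1 (by linarith)
  obtain ⟨c1l, c1u⟩ := b1_bounds
  obtain ⟨c2l, c2u⟩ := b2_bounds
  -- u-points below s-points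
  have hu1s2 : u1 A ≤ s2 := by
    rw [hs2]
    show (1:ℝ)/(A+1+mc) ≤ 1/(A + u1 1)
    apply div_le_div_of_nonneg_left (by norm_num) p1
    nlinarith
  have hu2s1 : u2 A ≤ s1 := by
    rw [hs1]
    show (1:ℝ)/(A+Mc) ≤ 1/(A + u2 1)
    apply div_le_div_of_nonneg_left (by norm_num) p2
    nlinarith [Mc_lb]
  have d1 := den_pos hV (by linarith : (0:ℝ) ≤ u1 A)
  have d2 := den_pos hV (by linarith : (0:ℝ) ≤ u2 A)
  have ds1 := den_pos hV hs1p.le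
  have ds2 := den_pos hV hs2p.le
  unfold Len
  rw [div_le_div_iff₀ (by positivity) (by positivity)]
  have m1 : den w (u1 A) ≤ den w s2 := den_mono hV hu1s2
  have m2 : den w (u2 A) ≤ den w s1 := den_mono hV hu2s1
  have hg : s2 - s1 ≤ u2 A - u1 A := by
    have := pB2 hal hau
    rw [hs1, hs2]
    linarith
  have hgn : 0 ≤ s2 - s1 := by linarith
  have k : (s2 - s1) * (den w (u1 A) * den w (u2 A)) ≤
      (u2 A - u1 A) * (den w s2 * den w s1) :=
    mul_le_mul hg (mul_le_mul m1 m2 d2.le ds2.le) (by positivity) (by linarith)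
  nlinarith [k]

lemma LB2' {w : List ℕ} (hV : V1 w) : Len w (1/((49:ℝ) + u2 1)) (1/((49:ℝ) + u1 1)) ≤ Len w (u1 48) (u2 48) := by
  obtain ⟨o1, o2, o3, o4⟩ := u_order (by norm_num : (1:ℝ) ≤ 48) (by norm_num)
  obtain ⟨b1, b2, b3, b4⟩ := u_order (le_refl (1:ℝ)) (by norm_num)
  have hm := mc_pos
  have p1 : (0:ℝ) < (49:ℝ) + u1 1 := by nlinarith
  have p2 : (0:ℝ) < (49:ℝ) + u2 1 := by nlinarith
  set s1 := 1/((49:ℝ) + u2 1) with hs1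
  set s2 := 1/((49:ℝ) + u1 1) with hs2
  have hs1p : 0 < s1 := by positivity
  have hs2p : 0 < s2 := by positivity
  have hss : s1 ≤ s2 := by
    rw [hs1, hs2]
    apply div_le_div_of_nonneg_left (by norm_num) p1 (by linarith)
  obtain ⟨c1l, c1u⟩ := b1_bounds
  obtain ⟨c2l, c2u⟩ := b2_bounds
  -- s-points below u-points here
  have e48 : u1 (48:ℝ) = 1/(49+mc) := by unfold u1; norm_num
  have hs2u1 : s2 ≤ u1 48 := by
    rw [hs2, e48]
    apply div_le_div_of_nonneg_left (by norm_num) (by nlinarith [mc_pos])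
    nlinarith
  have hs1u2 : s1 ≤ u2 48 := by
    rw [hs1]
    show (1:ℝ)/(49 + u2 1) ≤ 1/((48:ℝ)+Mc)
    apply div_le_div_of_nonneg_left (by norm_num) (by nlinarith [Mc_pos])
    nlinarith [Mc_ub]
  have d1 := den_pos hV (by linarith : (0:ℝ) ≤ u1 48)
  have d2 := den_pos hV (by linarith : (0:ℝ) ≤ u2 48)
  have ds1 := den_pos hV hs1p.le
  have ds2 := den_pos hV hs2p.le
  unfold Len
  rw [div_le_div_iff₀ (by positivity) (by positivity)]
  have k1 : den w (u1 48) * (1 + s1) ≤ den w s1 * (1 + u1 48) :=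
    keyD hV (by linarith)
  have k2 : den w (u2 48) * (1 + s2) ≤ den w s2 * (1 + u2 48) :=
    keyD hV (by linarith)
  have hp := pB2'
  rw [← hs1, ← hs2] at hp
  have := ratio_le (g1 := s2 - s1) (g2 := u2 48 - u1 48)
    (D1 := den w (u1 48)) (D2 := den w (u2 48))
    (E1 := den w s1) (E2 := den w s2)
    (f1 := 1 + u1 48) (f2 := 1 + u2 48) (e1 := 1 + s1) (e2 := 1 + s2)
    (by linarith) (by linarith) d1.le d2.le ds1.le ds2.le (by linarith) (by linarith)
    (by linarith) (by linarith) k1 k2 hp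
  nlinarith [this]

lemma LC {w : List ℕ} (hV : V1 w) {A : ℝ} (hal : 1 ≤ A) (hau : A ≤ 48) : Len w mc (u3 A) ≤ 1000000 * Len w (u1 A) (u2 A) := by
  obtain ⟨o1, o2, o3, o4⟩ := u_order hal hau
  have hm := mc_pos
  have pos1 : (0:ℝ) ≤ u1 A := by linarith
  have pos2 : (0:ℝ) ≤ u2 A := by linarith
  have pos3 : (0:ℝ) ≤ u3 A := by linarith
  have dm := den_pos hV hm.le
  have d1 := den_pos hV pos1
  have d2 := den_pos hV pos2
  have d3 := den_pos hV pos3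
  unfold Len
  rw [← mul_div_assoc, div_le_div_iff₀ (by positivity) (by positivity)]
  have m1 : den w (u1 A) ≤ den w (u3 A) := den_mono hV (by linarith)
  have m2 : den w (u2 A) ≤ den w (u3 A) := den_mono hV (by linarith)
  have m3 : den w (u3 A) ≤ 2 * den w mc := den_le_two_mc hV (by nlinarith [Mc_lt_one])
  have hc := pC hal hau
  have hgn : 0 ≤ u2 A - u1 A := by linarith
  have c1 : (u3 A - mc) * (den w (u1 A) * den w (u2 A)) ≤
      (250000 * (u2 A - u1 A)) * (den w (u3 A) * den w (u3 A)) :=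
    mul_le_mul hc (mul_le_mul m1 m2 d2.le d3.le) (by positivity) (by positivity)
  have c2 : den w (u3 A) * den w (u3 A) ≤ (2 * den w mc) * den w (u3 A) :=
    mul_le_mul_of_nonneg_right m3 d3.le
  nlinarith [c1, c2, mul_le_mul_of_nonneg_left c2 (by positivity : (0:ℝ) ≤ 250000 * (u2 A - u1 A))]

end S12

namespace S12

lemma split_abstract {b0 b1 b2 b3 α β p : ℝ} (h01 : b0 ≤ b1) (h12 : b1 ≤ b2)
    (h23 : b2 ≤ b3) (hlen : b2 - b1 ≤ β - α) (hp1 : α ≤ p) (hp2 : p ≤ β)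
    (hp3 : b0 ≤ p) (hp4 : p ≤ b3) :
    ∃ p', (α ≤ p' ∧ p' ≤ β) ∧ ((b0 ≤ p' ∧ p' ≤ b1) ∨ (b2 ≤ p' ∧ p' ≤ b3)) := by
  rcases le_total p b1 with hc | hc
  · exact ⟨p, ⟨hp1, hp2⟩, Or.inl ⟨hp3, hc⟩⟩
  rcases le_total b2 p with hc2 | hc2
  · exact ⟨p, ⟨hp1, hp2⟩, Or.inr ⟨hc2, hp4⟩⟩
  rcases le_total α b1 with hc3 | hc3
  · exact ⟨b1, ⟨hc3, le_trans hc hp2⟩, Or.inl ⟨h01, le_refl _⟩⟩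
  · refine ⟨b2, ⟨le_trans hp1 hc2, by linarith⟩, Or.inr ⟨le_refl _, h23⟩⟩

lemma V_append {w : List ℕ} (hw : V w) {d : ℕ} (hd : 1 ≤ d ∧ d ≤ 49) :
    V (w ++ [d]) := by
  intro e he
  rcases List.mem_append.1 he with h1 | h1
  · exact hw e h1
  · simp at h1; omega

/-- the "tail" refinement of the bridge `(w, a)`: keeps children `> a`. -/
lemma tailBridge {w : List ℕ} {a : ℕ} (hw : V w) (ha1 : 1 ≤ a) (ha48 : a ≤ 48) :
    ∃ w' a', V w' ∧ (1 ≤ a' ∧ a' ≤ 48) ∧ w.length ≤ w'.length ∧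
      bset w' a' = Set.uIcc (Pm w mc) (Pm w (u1 (a:ℝ))) ∧
      blen w' a' = Len w mc (u1 (a:ℝ)) ∧
      glen w' a' ≤ glen w a := by
  have hal : (1:ℝ) ≤ (a:ℝ) := by exact_mod_cast ha1
  have hau : (a:ℝ) ≤ 48 := by exact_mod_cast ha48
  rcases Nat.lt_or_ge a 48 with hlt | hge
  · -- a ≤ 47 : stay in the same word
    refine ⟨w, a+1, hw, ⟨by omega, by omega⟩, le_refl _, ?_, ?_, ?_⟩
    · unfold bset
      have hc : ((a+1:ℕ):ℝ) = (a:ℝ)+1 := by push_cast; ring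
      rw [hc]
      rfl
    · unfold blen
      have hc : ((a+1:ℕ):ℝ) = (a:ℝ)+1 := by push_cast; ring
      rw [hc]
      rfl
    · unfold glen
      have hc : ((a+1:ℕ):ℝ) = (a:ℝ)+1 := by push_cast; ring
      rw [hc]
      exact LB1 hw.v1 hal hau
  · -- a = 48 : move to the child with digit 49
    have ha : a = 48 := by omega
    subst ha
    have h49 : (1 ≤ 49 ∧ 49 ≤ 49) := by omega
    have hc49 : ((49:ℕ):ℝ) = (49:ℝ) := by push_cast; ring
    have hMc : u3 ((1:ℕ):ℝ) = Mc := by norm_num [u3, Mc]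
    have hmc' : (1:ℝ)/(49+Mc) = mc := by
      rw [eq_comm, eq_div_iff (by nlinarith [Mc_pos] : (49:ℝ)+Mc ≠ 0)]
      exact key49
    have he48 : (1:ℝ)/(49+mc) = u1 ((48:ℕ):ℝ) := by
      norm_num [u1]
    refine ⟨w ++ [49], 1, V_append hw h49, ⟨le_refl _, by omega⟩, by simp, ?_, ?_, ?_⟩
    · unfold bset
      rw [hMc, Pm_append, Pm_append, hc49, hmc', he48, Set.uIcc_comm]
    · unfold blen
      rw [hMc]
      have hlen := len_append hw.v1 (by omega : 1 ≤ 49) mc_pos.le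
        (le_of_lt (lt_trans mc_pos mc_lt_Mc)) (le_of_lt mc_lt_Mc)
      rw [hlen, hc49, hmc', he48]
    · unfold glen
      obtain ⟨c1l, c1u⟩ := b1_bounds
      obtain ⟨c2l, c2u⟩ := b2_bounds
      have hMc1 : u2 ((1:ℕ):ℝ) = u2 (1:ℝ) := by norm_num
      have hu11 : u1 ((1:ℕ):ℝ) = u1 (1:ℝ) := by norm_num
      rw [hMc1, hu11]
      have hlen := len_append hw.v1 (by omega : 1 ≤ 49)
        (by linarith : (0:ℝ) ≤ u1 (1:ℝ)) (by linarith : (0:ℝ) ≤ u2 (1:ℝ))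
        (le_of_lt (u1_lt_u2 (le_refl 1)))
      rw [hlen, hc49]
      have h48c : u1 ((48:ℕ):ℝ) = u1 (48:ℝ) := by norm_num
      have h48c' : u2 ((48:ℕ):ℝ) = u2 (48:ℝ) := by norm_num
      rw [h48c, h48c']
      exact LB2' hw.v1

/-- the "child" refinement of the bridge `(w, a)`: descend into child `a`. -/
lemma childBridge {w : List ℕ} {a : ℕ} (hw : V w) (ha1 : 1 ≤ a) (ha48 : a ≤ 48) :
    ∃ w' a', V w' ∧ (1 ≤ a' ∧ a' ≤ 48) ∧ w.length ≤ w'.length ∧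
      bset w' a' = Set.uIcc (Pm w (u2 (a:ℝ))) (Pm w (u3 (a:ℝ))) ∧
      blen w' a' = Len w (u2 (a:ℝ)) (u3 (a:ℝ)) ∧
      glen w' a' ≤ glen w a := by
  have hal : (1:ℝ) ≤ (a:ℝ) := by exact_mod_cast ha1
  have hau : (a:ℝ) ≤ 48 := by exact_mod_cast ha48
  obtain ⟨o1, o2, o3, o4⟩ := u_order hal hau
  have hm := mc_pos
  have hMc : u3 ((1:ℕ):ℝ) = Mc := by norm_num [u3, Mc]
  have hu2 : (1:ℝ)/((a:ℝ)+Mc) = u2 (a:ℝ) := rfl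
  have hu3 : (1:ℝ)/((a:ℝ)+mc) = u3 (a:ℝ) := rfl
  refine ⟨w ++ [a], 1, V_append hw ⟨ha1, by omega⟩, ⟨le_refl _, by omega⟩, by simp, ?_, ?_, ?_⟩
  · unfold bset
    rw [hMc, Pm_append, Pm_append, hu2, hu3, Set.uIcc_comm]
  · unfold blen
    rw [hMc]
    have hlen := len_append hw.v1 ha1 mc_pos.le
      (le_of_lt (lt_trans mc_pos mc_lt_Mc)) (le_of_lt mc_lt_Mc)
    rw [hlen, hu2, hu3]
  · unfold glen
    obtain ⟨c1l, c1u⟩ := b1_bounds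
    obtain ⟨c2l, c2u⟩ := b2_bounds
    have hMc1 : u2 ((1:ℕ):ℝ) = u2 (1:ℝ) := by norm_num
    have hu11 : u1 ((1:ℕ):ℝ) = u1 (1:ℝ) := by norm_num
    rw [hMc1, hu11]
    have hlen := len_append hw.v1 ha1
      (by linarith : (0:ℝ) ≤ u1 (1:ℝ)) (by linarith : (0:ℝ) ≤ u2 (1:ℝ))
      (le_of_lt (u1_lt_u2 (le_refl 1)))
    rw [hlen]
    exact LB2 hw.v1 hal hau

end S12

namespace S12

/-! ### bridge intervals in `Icc` form -/

lemma bset_spec {w : List ℕ} (hw : V1 w) {a : ℕ} (ha1 : 1 ≤ a) (ha48 : a ≤ 48) :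
    ∃ lo hi, bset w a = Set.Icc lo hi ∧ hi - lo = blen w a := by
  have hal : (1:ℝ) ≤ (a:ℝ) := by exact_mod_cast ha1
  have hau : (a:ℝ) ≤ 48 := by exact_mod_cast ha48
  obtain ⟨o1, o2, o3, o4⟩ := u_order hal hau
  have hm := mc_pos
  have h3 : (0:ℝ) ≤ u3 (a:ℝ) := by linarith
  have hmu : mc ≤ u3 (a:ℝ) := by linarith
  rcases Nat.even_or_odd w.length with he | ho
  · refine ⟨Pm w mc, Pm w (u3 (a:ℝ)), ?_, ?_⟩
    · exact Set.uIcc_of_le (pm_mono_even hw he hm.le h3 hmu)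
    · rw [pm_diff_even hw he hm.le h3]; rfl
  · refine ⟨Pm w (u3 (a:ℝ)), Pm w mc, ?_, ?_⟩
    · exact Set.uIcc_of_ge (pm_anti_odd hw (Nat.not_even_iff_odd.2 ho) hm.le h3 hmu)
    · rw [pm_diff_odd hw (Nat.not_even_iff_odd.2 ho) hm.le h3]; rfl

/-! ### the splitting step for one side -/

lemma split_main {t : ℝ} {w : List ℕ} {a : ℕ} (hw : V w) (ha1 : 1 ≤ a) (ha48 : a ≤ 48)
    {lo hi : ℝ} (hlen : glen w a ≤ hi - lo)
    {p : ℝ} (hp : p ∈ bset w a) (hpt1 : lo ≤ t - p) (hpt2 : t - p ≤ hi) :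
    ∃ w' a', V w' ∧ (1 ≤ a' ∧ a' ≤ 48) ∧
      bset w' a' ⊆ bset w a ∧
      blen w' a' + glen w a ≤ blen w a ∧
      glen w' a' ≤ glen w a ∧
      glen w a ≤ blen w' a' ∧
      (∃ p', p' ∈ bset w' a' ∧ lo ≤ t - p' ∧ t - p' ≤ hi) ∧
      w.length ≤ w'.length := by
  have hal : (1:ℝ) ≤ (a:ℝ) := by exact_mod_cast ha1
  have hau : (a:ℝ) ≤ 48 := by exact_mod_cast ha48
  obtain ⟨o1, o2, o3, o4⟩ := u_order hal hau
  have hm := mc_pos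
  have hx1 : (0:ℝ) ≤ u1 (a:ℝ) := by linarith
  have hx2 : (0:ℝ) ≤ u2 (a:ℝ) := by linarith
  have hx3 : (0:ℝ) ≤ u3 (a:ℝ) := by linarith
  have hV1 := hw.v1
  -- length decomposition
  have hadd1 : Len w mc (u1 (a:ℝ)) + Len w (u1 (a:ℝ)) (u2 (a:ℝ)) = Len w mc (u2 (a:ℝ)) :=
    len_add hV1 hm.le hx1 hx2
  have hadd2 : Len w mc (u2 (a:ℝ)) + Len w (u2 (a:ℝ)) (u3 (a:ℝ)) = Len w mc (u3 (a:ℝ)) :=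
    len_add hV1 hm.le hx2 hx3
  have hLA1 : Len w (u1 (a:ℝ)) (u2 (a:ℝ)) ≤ Len w mc (u1 (a:ℝ)) := LA1 hV1 hal hau
  have hLA2 : Len w (u1 (a:ℝ)) (u2 (a:ℝ)) ≤ Len w (u2 (a:ℝ)) (u3 (a:ℝ)) := LA2 hV1 hal hau
  have hgl : glen w a = Len w (u1 (a:ℝ)) (u2 (a:ℝ)) := rfl
  have hbl : blen w a = Len w mc (u3 (a:ℝ)) := rfl
  obtain ⟨wT, aT, hwT, haT, hlenT, hbsT, hblT, hglT⟩ := tailBridge hw ha1 ha48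
  obtain ⟨wC, aC, hwC, haC, hlenC, hbsC, hblC, hglC⟩ := childBridge hw ha1 ha48
  rcases Nat.even_or_odd w.length with he | ho
  · -- increasing case
    have m01 : Pm w mc ≤ Pm w (u1 (a:ℝ)) := pm_mono_even hV1 he hm.le hx1 o1.le
    have m12 : Pm w (u1 (a:ℝ)) ≤ Pm w (u2 (a:ℝ)) := pm_mono_even hV1 he hx1 hx2 o2.le
    have m23 : Pm w (u2 (a:ℝ)) ≤ Pm w (u3 (a:ℝ)) := pm_mono_even hV1 he hx2 hx3 o3.le
    have hBeq : bset w a = Set.Icc (Pm w mc) (Pm w (u3 (a:ℝ))) :=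
      Set.uIcc_of_le (le_trans m01 (le_trans m12 m23))
    rw [hBeq] at hp
    have hgap : Pm w (u2 (a:ℝ)) - Pm w (u1 (a:ℝ)) = glen w a := pm_diff_even hV1 he hx1 hx2
    obtain ⟨p', ⟨hq1, hq2⟩, hcases⟩ := split_abstract m01 m12 m23
      (by linarith : Pm w (u2 (a:ℝ)) - Pm w (u1 (a:ℝ)) ≤ (t - lo) - (t - hi))
      (by linarith : t - hi ≤ p) (by linarith : p ≤ t - lo) hp.1 hp.2
    rcases hcases with hL | hR
    · refine ⟨wT, aT, hwT, haT, ?_, ?_, ?_, ?_, ⟨p', ?_, by linarith, by linarith⟩, hlenT⟩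
      · rw [hbsT, hBeq, Set.uIcc_of_le m01]
        exact Set.Icc_subset_Icc (le_refl _) (le_trans m12 m23)
      · rw [hblT, hbl]
        have : Len w mc (u1 (a:ℝ)) = Pm w (u1 (a:ℝ)) - Pm w mc :=
          (pm_diff_even hV1 he hm.le hx1).symm
        rw [hgl]
        linarith [len_nonneg hV1 hx2 hx3 o3.le]
      · exact hglT
      · rw [hblT]; rw [hgl]; exact hLA1
      · rw [hbsT, Set.uIcc_of_le m01]
        exact ⟨hL.1, hL.2⟩
    · refine ⟨wC, aC, hwC, haC, ?_, ?_, ?_, ?_, ⟨p', ?_, by linarith, by linarith⟩, hlenC⟩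
      · rw [hbsC, hBeq, Set.uIcc_of_le m23]
        exact Set.Icc_subset_Icc (le_trans m01 m12) (le_refl _)
      · rw [hblC, hbl, hgl]
        linarith [len_nonneg hV1 hm.le hx1 o1.le]
      · exact hglC
      · rw [hblC, hgl]; exact hLA2
      · rw [hbsC, Set.uIcc_of_le m23]
        exact ⟨hR.1, hR.2⟩
  · -- decreasing case
    have hodd := Nat.not_even_iff_odd.2 ho
    have m01 : Pm w (u1 (a:ℝ)) ≤ Pm w mc := pm_anti_odd hV1 hodd hm.le hx1 o1.le
    have m12 : Pm w (u2 (a:ℝ)) ≤ Pm w (u1 (a:ℝ)) := pm_anti_odd hV1 hodd hx1 hx2 o2.le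
    have m23 : Pm w (u3 (a:ℝ)) ≤ Pm w (u2 (a:ℝ)) := pm_anti_odd hV1 hodd hx2 hx3 o3.le
    have hBeq : bset w a = Set.Icc (Pm w (u3 (a:ℝ))) (Pm w mc) :=
      Set.uIcc_of_ge (le_trans m23 (le_trans m12 m01))
    rw [hBeq] at hp
    have hgap : Pm w (u1 (a:ℝ)) - Pm w (u2 (a:ℝ)) = glen w a := pm_diff_odd hV1 hodd hx1 hx2
    obtain ⟨p', ⟨hq1, hq2⟩, hcases⟩ := split_abstract m23 m12 m01
      (by linarith : Pm w (u1 (a:ℝ)) - Pm w (u2 (a:ℝ)) ≤ (t - lo) - (t - hi))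
      (by linarith : t - hi ≤ p) (by linarith : p ≤ t - lo) hp.1 hp.2
    rcases hcases with hL | hR
    · -- here the lower part is the child
      refine ⟨wC, aC, hwC, haC, ?_, ?_, ?_, ?_, ⟨p', ?_, by linarith, by linarith⟩, hlenC⟩
      · rw [hbsC, hBeq, Set.uIcc_of_ge m23]
        exact Set.Icc_subset_Icc (le_refl _) (le_trans m12 m01)
      · rw [hblC, hbl, hgl]
        linarith [len_nonneg hV1 hm.le hx1 o1.le]
      · exact hglC
      · rw [hblC, hgl]; exact hLA2
      · rw [hbsC, Set.uIcc_of_ge m23]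
        exact ⟨hL.1, hL.2⟩
    · -- upper part is the tail
      refine ⟨wT, aT, hwT, haT, ?_, ?_, ?_, ?_, ⟨p', ?_, by linarith, by linarith⟩, hlenT⟩
      · rw [hbsT, hBeq, Set.uIcc_of_ge m01]
        exact Set.Icc_subset_Icc (le_trans m23 m12) (le_refl _)
      · rw [hblT, hbl, hgl]
        linarith [len_nonneg hV1 hx2 hx3 o3.le]
      · exact hglT
      · rw [hblT, hgl]; exact hLA1
      · rw [hbsT, Set.uIcc_of_ge m01]
        exact ⟨hR.1, hR.2⟩

end S12

namespace S12

structure St where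
  w1 : List ℕ
  a1 : ℕ
  w2 : List ℕ
  a2 : ℕ

def Good (t : ℝ) (s : St) : Prop :=
  V s.w1 ∧ V s.w2 ∧ (1 ≤ s.a1 ∧ s.a1 ≤ 48) ∧ (1 ≤ s.a2 ∧ s.a2 ≤ 48) ∧
  (∃ p, p ∈ bset s.w1 s.a1 ∧ t - p ∈ bset s.w2 s.a2) ∧
  glen s.w1 s.a1 ≤ blen s.w2 s.a2 ∧ glen s.w2 s.a2 ≤ blen s.w1 s.a1

noncomputable def Phi (s : St) : ℝ := blen s.w1 s.a1 + blen s.w2 s.a2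

lemma Good_swap {t : ℝ} {s : St} (h : Good t s) :
    Good t ⟨s.w2, s.a2, s.w1, s.a1⟩ := by
  obtain ⟨h1, h2, h3, h4, ⟨p, hp1, hp2⟩, h5, h6⟩ := h
  exact ⟨h2, h1, h4, h3, ⟨t - p, hp2, by simpa using hp1⟩, h6, h5⟩

lemma glen_pos {w : List ℕ} (hw : V1 w) {a : ℕ} (ha1 : 1 ≤ a) (ha48 : a ≤ 48) :
    0 < glen w a := by
  have hal : (1:ℝ) ≤ (a:ℝ) := by exact_mod_cast ha1
  have hau : (a:ℝ) ≤ 48 := by exact_mod_cast ha48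
  obtain ⟨o1, o2, o3, o4⟩ := u_order hal hau
  have hm := mc_pos
  have d1 := den_pos hw (by linarith : (0:ℝ) ≤ u1 (a:ℝ))
  have d2 := den_pos hw (by linarith : (0:ℝ) ≤ u2 (a:ℝ))
  unfold glen Len
  apply div_pos (by linarith) (by positivity)

lemma blen_pos {w : List ℕ} (hw : V1 w) {a : ℕ} (ha1 : 1 ≤ a) (ha48 : a ≤ 48) :
    0 < blen w a := by
  have hal : (1:ℝ) ≤ (a:ℝ) := by exact_mod_cast ha1
  have hau : (a:ℝ) ≤ 48 := by exact_mod_cast ha48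
  obtain ⟨o1, o2, o3, o4⟩ := u_order hal hau
  have hm := mc_pos
  have dm := den_pos hw mc_pos.le
  have d3 := den_pos hw (by linarith : (0:ℝ) ≤ u3 (a:ℝ))
  unfold blen Len
  apply div_pos (by linarith) (by positivity)

lemma step1 {t : ℝ} {s : St} (h : Good t s)
    (hcmp : glen s.w2 s.a2 ≤ glen s.w1 s.a1) :
    ∃ w' a', Good t ⟨w', a', s.w2, s.a2⟩ ∧
      bset w' a' ⊆ bset s.w1 s.a1 ∧
      blen w' a' + glen s.w1 s.a1 ≤ blen s.w1 s.a1 ∧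
      s.w1.length ≤ w'.length := by
  obtain ⟨h1, h2, h3, h4, ⟨p, hp1, hp2⟩, h5, h6⟩ := h
  obtain ⟨lo2, hi2, hB2, hB2len⟩ := bset_spec h2.v1 h4.1 h4.2
  rw [hB2] at hp2
  obtain ⟨w', a', hw', ha', hsub, hdec, hgle, hgeb, ⟨p', hp'1, hp'2, hp'3⟩, hlen⟩ :=
    split_main h1 h3.1 h3.2 (by linarith [hp2.1, hp2.2] : glen s.w1 s.a1 ≤ hi2 - lo2)
      hp1 hp2.1 hp2.2
  refine ⟨w', a', ⟨hw', h2, ha', h4, ⟨p', hp'1, ?_⟩, ?_, ?_⟩, hsub, hdec, hlen⟩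
  · rw [hB2]; exact ⟨hp'2, hp'3⟩
  · exact le_trans hgle h5
  · exact le_trans hcmp hgeb

lemma step {t : ℝ} {s : St} (h : Good t s) :
    ∃ s', Good t s' ∧ Phi s' ≤ (1 - 1/2000000) * Phi s ∧
      bset s'.w1 s'.a1 ⊆ bset s.w1 s.a1 ∧ bset s'.w2 s'.a2 ⊆ bset s.w2 s.a2 ∧
      s.w1.length ≤ s'.w1.length ∧ s.w2.length ≤ s'.w2.length := by
  obtain ⟨h1, h2, h3, h4, hinv, h5, h6⟩ := h
  have g1p := glen_pos h1.v1 h3.1 h3.2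
  have g2p := glen_pos h2.v1 h4.1 h4.2
  have hc1 : blen s.w1 s.a1 ≤ 1000000 * glen s.w1 s.a1 := by
    have hal : (1:ℝ) ≤ (s.a1:ℝ) := by exact_mod_cast h3.1
    have hau : (s.a1:ℝ) ≤ 48 := by exact_mod_cast h3.2
    exact LC h1.v1 hal hau
  have hc2 : blen s.w2 s.a2 ≤ 1000000 * glen s.w2 s.a2 := by
    have hal : (1:ℝ) ≤ (s.a2:ℝ) := by exact_mod_cast h4.1
    have hau : (s.a2:ℝ) ≤ 48 := by exact_mod_cast h4.2
    exact LC h2.v1 hal hau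
  rcases le_total (glen s.w2 s.a2) (glen s.w1 s.a1) with hcmp | hcmp
  · obtain ⟨w', a', hG, hsub, hdec, hlen⟩ := step1 ⟨h1, h2, h3, h4, hinv, h5, h6⟩ hcmp
    refine ⟨⟨w', a', s.w2, s.a2⟩, hG, ?_, hsub, le_refl _, hlen, le_refl _⟩
    unfold Phi
    simp only
    nlinarith
  · have hswap : Good t ⟨s.w2, s.a2, s.w1, s.a1⟩ :=
      Good_swap ⟨h1, h2, h3, h4, hinv, h5, h6⟩
    obtain ⟨w', a', hG, hsub, hdec, hlen⟩ := step1 hswap (by simpa using hcmp)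
    refine ⟨⟨s.w1, s.a1, w', a'⟩, Good_swap hG, ?_, le_refl _, hsub, le_refl _, hlen⟩
    unfold Phi
    simp only at hdec hsub hlen ⊢
    nlinarith

end S12


namespace S12

lemma len_nil (x y : ℝ) : Len [] x y = y - x := by
  unfold Len den
  norm_num

lemma good_init {t : ℝ} (ht : t ∈ Set.Icc (1/6 : ℝ) (11/6)) :
    Good t ⟨[], 1, [], 1⟩ := by
  obtain ⟨ht1, ht2⟩ := ht
  obtain ⟨n1, n2, n3, n4⟩ := numfacts
  obtain ⟨c1l, c1u⟩ := b1_bounds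
  obtain ⟨c2l, c2u⟩ := b2_bounds
  have hV : V ([] : List ℕ) := by intro d hd; simp at hd
  have hMc : u3 ((1:ℕ):ℝ) = Mc := by norm_num [u3, Mc]
  have hbs : bset [] 1 = Set.Icc mc Mc := by
    unfold bset
    rw [hMc]
    simp only [Pm_nil]
    exact Set.uIcc_of_le (le_of_lt mc_lt_Mc)
  have hmem : t/2 ∈ bset [] 1 := by
    rw [hbs]
    constructor
    · nlinarith
    · nlinarith
  have hglen : glen [] 1 = u2 ((1:ℕ):ℝ) - u1 ((1:ℕ):ℝ) := len_nil _ _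
  have hblen : blen [] 1 = Mc - mc := by
    unfold blen
    rw [hMc, len_nil]
  have h11 : u1 ((1:ℕ):ℝ) = u1 (1:ℝ) := by norm_num
  have h21 : u2 ((1:ℕ):ℝ) = u2 (1:ℝ) := by norm_num
  refine ⟨hV, hV, ⟨by decide, by decide⟩, ⟨by decide, by decide⟩,
    ⟨t/2, hmem, by rw [show t - t/2 = t/2 by ring]; exact hmem⟩, ?_, ?_⟩ <;>
  · rw [hglen, hblen, h11, h21]
    nlinarith

noncomputable def chain (t : ℝ) (h0 : Good t ⟨[], 1, [], 1⟩) : ℕ → {s : St // Good t s} :=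
  fun n => Nat.rec ⟨⟨[], 1, [], 1⟩, h0⟩
    (fun _ ih => ⟨(step ih.2).choose, (step ih.2).choose_spec.1⟩) n

lemma chain_zero (t : ℝ) (h0 : Good t ⟨[], 1, [], 1⟩) :
    (chain t h0 0).1 = ⟨[], 1, [], 1⟩ := rfl

lemma chain_succ_spec (t : ℝ) (h0 : Good t ⟨[], 1, [], 1⟩) (n : ℕ) :
    Phi (chain t h0 (n+1)).1 ≤ (1 - 1/2000000) * Phi (chain t h0 n).1 ∧
    bset (chain t h0 (n+1)).1.w1 (chain t h0 (n+1)).1.a1 ⊆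
      bset (chain t h0 n).1.w1 (chain t h0 n).1.a1 ∧
    bset (chain t h0 (n+1)).1.w2 (chain t h0 (n+1)).1.a2 ⊆
      bset (chain t h0 n).1.w2 (chain t h0 n).1.a2 ∧
    (chain t h0 n).1.w1.length ≤ (chain t h0 (n+1)).1.w1.length ∧
    (chain t h0 n).1.w2.length ≤ (chain t h0 (n+1)).1.w2.length :=
  (step (chain t h0 n).2).choose_spec.2

/-! ### lower bound for bridge length in terms of word length -/

lemma den_upper {w : List ℕ} (hw : V w) {x : ℝ} (hx0 : 0 ≤ x) (hx1 : x ≤ 1) :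
    den w x ≤ 2 * (50:ℝ) ^ w.length := by
  have hq := (ct_qbound hw).1
  have h5 : ((ct w).q' : ℝ) ≤ ((ct w).q : ℝ) := by
    exact_mod_cast (ct_facts hw.v1).2.2.2.2.1
  have h4 : (0:ℝ) ≤ ((ct w).q' : ℝ) := by exact_mod_cast (ct_facts hw.v1).2.2.2.1
  have hqr : ((ct w).q : ℝ) ≤ (50:ℝ) ^ w.length := by
    have : (((50:ℤ) ^ w.length : ℤ) : ℝ) = (50:ℝ) ^ w.length := by push_cast; ring
    rw [← this]
    exact_mod_cast hq
  unfold den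
  nlinarith

lemma blen_lower {w : List ℕ} (hw : V w) {a : ℕ} (ha1 : 1 ≤ a) (ha48 : a ≤ 48)
    {L : ℕ} (hL : w.length ≤ L) :
    (1:ℝ) / (8000 * 2500 ^ L) ≤ blen w a := by
  have hal : (1:ℝ) ≤ (a:ℝ) := by exact_mod_cast ha1
  have hau : (a:ℝ) ≤ 48 := by exact_mod_cast ha48
  obtain ⟨n1, n2, n3, n4⟩ := numfacts
  have hm := mc_pos
  have hx3 : (0:ℝ) ≤ u3 (a:ℝ) := by
    have := u3_pos hal; linarith
  have hu3Mc := u3_le_Mc hal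
  have hd : (0:ℝ) < (a:ℝ) + mc := by nlinarith
  have hnum : (1:ℝ)/2000 ≤ u3 (a:ℝ) - mc := by
    have : (1:ℝ)/(48 + mc) ≤ u3 (a:ℝ) := by
      unfold u3
      apply div_le_div_of_nonneg_left (by norm_num) hd
      nlinarith
    have h48 : (1:ℝ)/2000 + mc ≤ 1/(48+mc) := by
      rw [div_add' _ _ _ (by norm_num : (2000:ℝ) ≠ 0), div_le_div_iff₀ (by norm_num) (by nlinarith)]
      nlinarith
    linarith
  have hdm : den w mc ≤ 2 * (50:ℝ) ^ L := by
    calc den w mc ≤ 2 * (50:ℝ) ^ w.length := den_upper hw hm.le (by nlinarith)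
    _ ≤ 2 * (50:ℝ) ^ L := by
        have := pow_le_pow_right₀ (by norm_num : (1:ℝ) ≤ 50) hL
        linarith
  have hd3 : den w (u3 (a:ℝ)) ≤ 2 * (50:ℝ) ^ L := by
    calc den w (u3 (a:ℝ)) ≤ 2 * (50:ℝ) ^ w.length :=
        den_upper hw hx3 (by nlinarith [Mc_lt_one])
    _ ≤ 2 * (50:ℝ) ^ L := by
        have := pow_le_pow_right₀ (by norm_num : (1:ℝ) ≤ 50) hL
        linarith
  have hdmp := den_pos hw.v1 hm.le
  have hd3p := den_pos hw.v1 hx3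
  have hpow : (0:ℝ) < (50:ℝ) ^ L := by positivity
  have hprod : den w mc * den w (u3 (a:ℝ)) ≤ 4 * (2500:ℝ) ^ L := by
    have h1 : den w mc * den w (u3 (a:ℝ)) ≤ (2 * (50:ℝ)^L) * (2 * (50:ℝ)^L) :=
      mul_le_mul hdm hd3 hd3p.le (by positivity)
    have h2 : ((50:ℝ)^L) * ((50:ℝ)^L) = (2500:ℝ)^L := by
      rw [← mul_pow]; norm_num
    nlinarith [h2]
  have hmu : mc ≤ u3 (a:ℝ) := by nlinarith
  unfold blen Len
  rw [div_le_div_iff₀ (by positivity) (mul_pos hdmp hd3p)]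
  have hp2 : (0:ℝ) < (2500:ℝ)^L := by positivity
  nlinarith [mul_le_mul hnum hprod (mul_pos hdmp hd3p).le (by linarith : (0:ℝ) ≤ u3 (a:ℝ) - mc)]

/-! ### continuity of Pm -/

lemma Pm_contOn {w : List ℕ} (hw : V1 w) :
    ContinuousOn (Pm w) {x : ℝ | 0 ≤ x} := by
  induction w with
  | nil => exact continuousOn_id
  | cons a w ih =>
    obtain ⟨ha, hw'⟩ := V1_cons hw
    have ih' := ih hw'
    have : ∀ x ∈ {x : ℝ | 0 ≤ x}, (a:ℝ) + Pm w x ≠ 0 := by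
      intro x hx
      have h1 : (1:ℝ) ≤ (a:ℝ) := by exact_mod_cast ha
      have := Pm_nonneg hw' hx
      positivity
    have hcont : ContinuousOn (fun x => 1 / ((a:ℝ) + Pm w x)) {x : ℝ | 0 ≤ x} := by
      apply ContinuousOn.div continuousOn_const
      · exact continuousOn_const.add ih'
      · intro x hx; exact this x hx
    exact hcont

/-! ### membership in Fset from nested bridges -/

lemma bridge_to_fset {x : ℝ}
    (hx : ∀ L : ℕ, ∃ w a, V w ∧ (1 ≤ a ∧ a ≤ 48) ∧ L ≤ w.length ∧ x ∈ bset w a) :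
    x ∈ Fset 49 := by
  have horb : ∀ k : ℕ, gaussMap^[k] x ∈ Set.Icc mc Mc := by
    intro k
    obtain ⟨w, a, hw, ha, hlen, hmem⟩ := hx (k+1)
    have hal : (1:ℝ) ≤ (a:ℝ) := by exact_mod_cast ha.1
    have hau : (a:ℝ) ≤ 48 := by exact_mod_cast ha.2
    have hm := mc_pos
    have hu3p := u3_pos hal
    have hu3Mc := u3_le_Mc hal
    have hmu3 : mc ≤ u3 (a:ℝ) := le_of_lt (mc_lt_u3 (by linarith) (by linarith))
    -- x is in the image of Pm w
    have hsub : Set.uIcc mc (u3 (a:ℝ)) ⊆ {z : ℝ | 0 ≤ z} := by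
      rw [Set.uIcc_of_le hmu3]
      intro z hz
      exact le_trans hm.le hz.1
    have hiv := intermediate_value_uIcc
      (ContinuousOn.mono (Pm_contOn hw.v1) hsub)
    have hmem' : x ∈ Pm w '' Set.uIcc mc (u3 (a:ℝ)) := hiv hmem
    obtain ⟨ξ, hξmem, hξeq⟩ := hmem'
    rw [Set.uIcc_of_le hmu3] at hξmem
    have hξIcc : ξ ∈ Set.Icc mc Mc := ⟨hξmem.1, le_trans hξmem.2 hu3Mc⟩
    have hiter := gauss_iter (k := k) hw (by omega) hξIcc
    rw [← hξeq, hiter]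
    apply Pm_mem _ hξIcc
    intro d hd
    exact hw d (List.drop_subset _ _ hd)
  refine ⟨irrational_of_orbit horb, ?_, ?_⟩
  · have h0 := horb 0
    simp at h0
    exact ⟨lt_of_lt_of_le mc_pos h0.1, lt_of_le_of_lt h0.2 Mc_lt_one⟩
  · intro k
    have hk := horb k
    have hz1 : (0:ℝ) < gaussMap^[k] x := lt_of_lt_of_le mc_pos hk.1
    have hz2 : 1 / gaussMap^[k] x < 50 := by
      rw [div_lt_iff₀ hz1]
      nlinarith [mc_lb, hk.1]
    have : ⌊1 / gaussMap^[k] x⌋ < 50 := by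
      apply Int.floor_lt.2
      exact_mod_cast hz2
    omega

end S12


open S12

/-- `F₄₉ + F₄₉ ⊇ [1/6, 11/6]`. -/
theorem stmt12 :
    ∀ t ∈ Set.Icc (1 / 6 : ℝ) (11 / 6),
      ∃ x ∈ Fset 49, ∃ y ∈ Fset 49, t = x + y := by
  intro t ht
  have h0 := good_init ht
  set C : ℕ → {s : St // Good t s} := chain t h0 with hC
  set r : ℝ := 1 - 1/2000000 with hr
  have hr0 : (0:ℝ) ≤ r := by rw [hr]; norm_num
  have hr1 : r < 1 := by rw [hr]; norm_num
  -- basic data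
  have hV1 : ∀ n, V (C n).1.w1 := fun n => (C n).2.1
  have hV2 : ∀ n, V (C n).1.w2 := fun n => (C n).2.2.1
  have hA1 : ∀ n, 1 ≤ (C n).1.a1 ∧ (C n).1.a1 ≤ 48 := fun n => (C n).2.2.2.1
  have hA2 : ∀ n, 1 ≤ (C n).1.a2 ∧ (C n).1.a2 ≤ 48 := fun n => (C n).2.2.2.2.1
  have hINV : ∀ n, ∃ p, p ∈ bset (C n).1.w1 (C n).1.a1 ∧
      t - p ∈ bset (C n).1.w2 (C n).1.a2 := fun n => (C n).2.2.2.2.2.1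
  -- Phi facts
  have hphis : ∀ n, Phi (C (n+1)).1 ≤ r * Phi (C n).1 :=
    fun n => (chain_succ_spec t h0 n).1
  have hphipos : ∀ n, 0 < Phi (C n).1 := by
    intro n
    have b1 := blen_pos (hV1 n).v1 (hA1 n).1 (hA1 n).2
    have b2 := blen_pos (hV2 n).v1 (hA2 n).1 (hA2 n).2
    unfold Phi
    linarith
  have hphi : ∀ n, Phi (C n).1 ≤ r^n * Phi (C 0).1 := by
    intro n
    induction n with
    | zero => simp
    | succ n ih =>
      calc Phi (C (n+1)).1 ≤ r * Phi (C n).1 := hphis n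
        _ ≤ r * (r^n * Phi (C 0).1) := by
            apply mul_le_mul_of_nonneg_left ih hr0
        _ = r^(n+1) * Phi (C 0).1 := by ring
  -- nesting
  have hnest1 : ∀ n, bset (C (n+1)).1.w1 (C (n+1)).1.a1 ⊆ bset (C n).1.w1 (C n).1.a1 :=
    fun n => (chain_succ_spec t h0 n).2.1
  have hnest2 : ∀ n, bset (C (n+1)).1.w2 (C (n+1)).1.a2 ⊆ bset (C n).1.w2 (C n).1.a2 :=
    fun n => (chain_succ_spec t h0 n).2.2.1
  have hmono1 : ∀ m n, m ≤ n →
      bset (C n).1.w1 (C n).1.a1 ⊆ bset (C m).1.w1 (C m).1.a1 := by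
    intro m n h
    induction n, h using Nat.le_induction with
    | base => exact subset_rfl
    | succ n hmn ih => exact subset_trans (hnest1 n) ih
  have hmono2 : ∀ m n, m ≤ n →
      bset (C n).1.w2 (C n).1.a2 ⊆ bset (C m).1.w2 (C m).1.a2 := by
    intro m n h
    induction n, h using Nat.le_induction with
    | base => exact subset_rfl
    | succ n hmn ih => exact subset_trans (hnest2 n) ih
  -- lengths are unbounded
  have hlen1 : ∀ L, ∃ n, L ≤ (C n).1.w1.length := by
    intro L
    by_contra hcon
    push_neg at hcon
    have hlow : ∀ n, (1:ℝ)/(8000 * 2500 ^ L) ≤ Phi (C n).1 := by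
      intro n
      have := blen_lower (hV1 n) (hA1 n).1 (hA1 n).2 (le_of_lt (hcon n))
      have b2 := blen_pos (hV2 n).v1 (hA2 n).1 (hA2 n).2
      unfold Phi
      linarith
    have hδ : (0:ℝ) < 1/(8000 * 2500 ^ L) / Phi (C 0).1 :=
      div_pos (by positivity) (hphipos 0)
    obtain ⟨n, hn⟩ := exists_pow_lt_of_lt_one hδ hr1
    have h1 := hphi n
    have h2 := hlow n
    have h3 : r^n * Phi (C 0).1 < 1/(8000 * 2500 ^ L) := by
      rw [lt_div_iff₀ (hphipos 0)] at hn
      linarith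
    exact lt_irrefl _ (lt_of_le_of_lt (le_trans h2 h1) h3)
  have hlen2 : ∀ L, ∃ n, L ≤ (C n).1.w2.length := by
    intro L
    by_contra hcon
    push_neg at hcon
    have hlow : ∀ n, (1:ℝ)/(8000 * 2500 ^ L) ≤ Phi (C n).1 := by
      intro n
      have := blen_lower (hV2 n) (hA2 n).1 (hA2 n).2 (le_of_lt (hcon n))
      have b1 := blen_pos (hV1 n).v1 (hA1 n).1 (hA1 n).2
      unfold Phi
      linarith
    have hδ : (0:ℝ) < 1/(8000 * 2500 ^ L) / Phi (C 0).1 :=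
      div_pos (by positivity) (hphipos 0)
    obtain ⟨n, hn⟩ := exists_pow_lt_of_lt_one hδ hr1
    have h1 := hphi n
    have h2 := hlow n
    have h3 : r^n * Phi (C 0).1 < 1/(8000 * 2500 ^ L) := by
      rw [lt_div_iff₀ (hphipos 0)] at hn
      linarith
    exact lt_irrefl _ (lt_of_le_of_lt (le_trans h2 h1) h3)
  -- intervals
  have hspec1 : ∀ n, ∃ lo hi, bset (C n).1.w1 (C n).1.a1 = Set.Icc lo hi ∧
      hi - lo = blen (C n).1.w1 (C n).1.a1 :=
    fun n => bset_spec (hV1 n).v1 (hA1 n).1 (hA1 n).2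
  have hspec2 : ∀ n, ∃ lo hi, bset (C n).1.w2 (C n).1.a2 = Set.Icc lo hi ∧
      hi - lo = blen (C n).1.w2 (C n).1.a2 :=
    fun n => bset_spec (hV2 n).v1 (hA2 n).1 (hA2 n).2
  choose lo1 hi1 heq1 hbl1 using hspec1
  choose lo2 hi2 heq2 hbl2 using hspec2
  have hlohi1 : ∀ n, lo1 n ≤ hi1 n := by
    intro n
    have := blen_pos (hV1 n).v1 (hA1 n).1 (hA1 n).2
    linarith [hbl1 n]
  have hlohi2 : ∀ n, lo2 n ≤ hi2 n := by
    intro n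
    have := blen_pos (hV2 n).v1 (hA2 n).1 (hA2 n).2
    linarith [hbl2 n]
  have hcross1 : ∀ j n, lo1 j ≤ hi1 n := by
    intro j n
    rcases le_total j n with h | h
    · have : lo1 n ∈ Set.Icc (lo1 j) (hi1 j) := by
        rw [← heq1 j]
        exact hmono1 j n h (by rw [heq1 n]; exact ⟨le_refl _, hlohi1 n⟩)
      exact le_trans this.1 (hlohi1 n)
    · have : lo1 j ∈ Set.Icc (lo1 n) (hi1 n) := by
        rw [← heq1 n]
        exact hmono1 n j h (by rw [heq1 j]; exact ⟨le_refl _, hlohi1 j⟩)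
      exact this.2
  have hcross2 : ∀ j n, lo2 j ≤ hi2 n := by
    intro j n
    rcases le_total j n with h | h
    · have h2 : lo2 n ∈ Set.Icc (lo2 j) (hi2 j) := by
        rw [← heq2 j]
        exact hmono2 j n h (by rw [heq2 n]; exact ⟨le_refl _, hlohi2 n⟩)
      exact le_trans h2.1 (hlohi2 n)
    · have h2 : lo2 j ∈ Set.Icc (lo2 n) (hi2 n) := by
        rw [← heq2 n]
        exact hmono2 n j h (by rw [heq2 j]; exact ⟨le_refl _, hlohi2 j⟩)
      exact h2.2
  -- the limit points
  set x : ℝ := ⨆ n, lo1 n with hx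
  set y : ℝ := ⨆ n, lo2 n with hy
  have hbdd1 : BddAbove (Set.range lo1) := by
    refine ⟨hi1 0, ?_⟩
    rintro _ ⟨n, rfl⟩
    exact hcross1 n 0
  have hbdd2 : BddAbove (Set.range lo2) := by
    refine ⟨hi2 0, ?_⟩
    rintro _ ⟨n, rfl⟩
    exact hcross2 n 0
  have hxlo : ∀ n, lo1 n ≤ x := fun n => le_ciSup hbdd1 n
  have hxhi : ∀ n, x ≤ hi1 n := fun n => ciSup_le (fun j => hcross1 j n)
  have hylo : ∀ n, lo2 n ≤ y := fun n => le_ciSup hbdd2 n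
  have hyhi : ∀ n, y ≤ hi2 n := fun n => ciSup_le (fun j => hcross2 j n)
  have hxmem : ∀ n, x ∈ bset (C n).1.w1 (C n).1.a1 := by
    intro n; rw [heq1 n]; exact ⟨hxlo n, hxhi n⟩
  have hymem : ∀ n, y ∈ bset (C n).1.w2 (C n).1.a2 := by
    intro n; rw [heq2 n]; exact ⟨hylo n, hyhi n⟩
  -- membership in Fset 49
  have hxF : x ∈ Fset 49 := by
    apply bridge_to_fset
    intro L
    obtain ⟨n, hn⟩ := hlen1 L
    exact ⟨(C n).1.w1, (C n).1.a1, hV1 n, hA1 n, hn, hxmem n⟩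
  have hyF : y ∈ Fset 49 := by
    apply bridge_to_fset
    intro L
    obtain ⟨n, hn⟩ := hlen2 L
    exact ⟨(C n).1.w2, (C n).1.a2, hV2 n, hA2 n, hn, hymem n⟩
  -- t = x + y
  have hdiff : ∀ n, |t - x - y| ≤ Phi (C n).1 := by
    intro n
    obtain ⟨p, hp1, hp2⟩ := hINV n
    rw [heq1 n] at hp1
    rw [heq2 n] at hp2
    have e1 : |p - x| ≤ blen (C n).1.w1 (C n).1.a1 := by
      rw [abs_le]
      constructor
      · linarith [hp1.1, hxhi n, hbl1 n]
      · linarith [hp1.2, hxlo n, hbl1 n]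
    have e2 : |(t - p) - y| ≤ blen (C n).1.w2 (C n).1.a2 := by
      rw [abs_le]
      constructor
      · linarith [hp2.1, hyhi n, hbl2 n]
      · linarith [hp2.2, hylo n, hbl2 n]
    have eq : t - x - y = (p - x) + ((t - p) - y) := by ring
    rw [eq]
    calc |(p - x) + ((t - p) - y)| ≤ |p - x| + |(t - p) - y| := abs_add_le _ _
      _ ≤ _ := by unfold Phi; linarith
  have hteq : t = x + y := by
    by_contra hne
    have hc : 0 < |t - x - y| := by
      rw [abs_pos]
      intro h
      exact hne (by linarith)
    obtain ⟨n, hn⟩ := exists_pow_lt_of_lt_one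
      (div_pos hc (hphipos 0)) hr1
    rw [lt_div_iff₀ (hphipos 0)] at hn
    linarith [hdiff n, hphi n]
  exact ⟨x, hxF, y, hyF, hteq⟩
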